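/- arXiv:0911.2960 — 5 statements merged into one kernel-verified Lean document; each statement's English description precedes it below -/
import Mathlib

section
/- Fix an integer k ≥ 3, a length ℓ ≥ 0, and an endpoint μ ∈ W_{k−1}. Then ω^μ_{k,ℓ} = Σ_{π ∈ S_{k−1}} sgn(π) · a^{π(μ)}_{k,ℓ}, where the sum is over all permutations π of {1,…,k−1}, sgn(π) is the sign of π, and π(μ) = (μ_{π(1)}, μ_{π(2)}, …, μ_{π(k−1)}). -/
open Finset

/-- Lattice points in `ℤ^(k-1)`; coordinate `i : Fin (k-1)` represents `ν_{i+1}`. -/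
abbrev Pt (k : ℕ) := Fin (k - 1) → ℤ

/-- The starting point `δ = (k-2, k-3, …, 1, 0)`. -/
def delta (k : ℕ) : Pt k := fun i => (k : ℤ) - 2 - (i : ℤ)

/-- Membership in `Q_{k-1}`: all coordinates nonnegative. -/
def inQ {k : ℕ} (v : Pt k) : Prop := ∀ i, 0 ≤ v i

/-- Membership in `W_{k-1}`: `ν_1 > ν_2 > ⋯ > ν_{k-1} ≥ 0`. -/
def inW {k : ℕ} (v : Pt k) : Prop := StrictAnti v ∧ ∀ i, 0 ≤ v i

/-- `eVec k i` is `e_i`: `e_0 = 0` and for `1 ≤ i ≤ k-1`, `e_i` is the `i`-th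
standard basis vector of `ℤ^(k-1)`. -/
def eVec (k : ℕ) (i : Fin k) : Pt k := fun j => if (j : ℕ) + 1 = (i : ℕ) then 1 else 0

/-- The vector `e_1`. -/
def eOne (k : ℕ) : Pt k := fun j => if (j : ℕ) = 0 then 1 else 0

/-- A step in `{+e_i : 0 ≤ i ≤ k-1}`. -/
def plusStep {k : ℕ} (d : Pt k) : Prop := ∃ i : Fin k, d = eVec k i

/-- A step in `{-e_i : 0 ≤ i ≤ k-1}`. -/
def minusStep {k : ℕ} (d : Pt k) : Prop := ∃ i : Fin k, d = -eVec k i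

/-- A `𝒫_D`-walk of length `ℓ`: starts at `δ`, stays in `D`, odd steps are `-e_i`,
even steps are `+e_i`. -/
def IsPWalk {k : ℕ} (D : Pt k → Prop) (ℓ : ℕ) (v : Fin (ℓ + 1) → Pt k) : Prop :=
  v ⟨0, Nat.succ_pos ℓ⟩ = delta k ∧ (∀ t, D (v t)) ∧
    ∀ t : ℕ, ∀ h : t + 1 < ℓ + 1,
      (Odd (t + 1) → minusStep (v ⟨t + 1, h⟩ - v ⟨t, by omega⟩)) ∧
      (Even (t + 1) → plusStep (v ⟨t + 1, h⟩ - v ⟨t, by omega⟩))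

/-- A `ℬ_D`-walk of length `ℓ`: starts at `δ`, stays in `D`, odd steps are `+e_i`,
even steps are `-e_i`. -/
def IsBWalk {k : ℕ} (D : Pt k → Prop) (ℓ : ℕ) (v : Fin (ℓ + 1) → Pt k) : Prop :=
  v ⟨0, Nat.succ_pos ℓ⟩ = delta k ∧ (∀ t, D (v t)) ∧
    ∀ t : ℕ, ∀ h : t + 1 < ℓ + 1,
      (Odd (t + 1) → plusStep (v ⟨t + 1, h⟩ - v ⟨t, by omega⟩)) ∧
      (Even (t + 1) → minusStep (v ⟨t + 1, h⟩ - v ⟨t, by omega⟩))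

/-- A walk is loop-free if no odd/even step pair `(+e_1, -e_1)` occurs. -/
def LoopFree {k ℓ : ℕ} (v : Fin (ℓ + 1) → Pt k) : Prop :=
  ∀ q : ℕ, 1 ≤ q → ∀ h : 2 * q < ℓ + 1,
    ¬ (v ⟨2 * q - 1, by omega⟩ - v ⟨2 * q - 2, by omega⟩ = eOne k ∧
       v ⟨2 * q, h⟩ - v ⟨2 * q - 1, by omega⟩ = -eOne k)

/-- `a^ν_{k,ℓ}`: the number of `𝒫_{Q_{k-1}}`-walks of length `ℓ` ending at `ν`. -/
noncomputable def aCount (k ℓ : ℕ) (ν : Pt k) : ℕ :=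
  Nat.card {v : Fin (ℓ + 1) → Pt k //
    IsPWalk (inQ (k := k)) ℓ v ∧ v (Fin.last ℓ) = ν}

/-- `ω^ν_{k,ℓ}`: the number of `𝒫_{W_{k-1}}`-walks of length `ℓ` ending at `ν`. -/
noncomputable def omegaCount (k ℓ : ℕ) (ν : Pt k) : ℕ :=
  Nat.card {v : Fin (ℓ + 1) → Pt k //
    IsPWalk (inW (k := k)) ℓ v ∧ v (Fin.last ℓ) = ν}

/-- `σ^ν_{k,ℓ}`: the number of `ℬ_{W_{k-1}}`-walks of length `ℓ` ending at `ν`. -/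
noncomputable def sigmaCount (k ℓ : ℕ) (ν : Pt k) : ℕ :=
  Nat.card {v : Fin (ℓ + 1) → Pt k //
    IsBWalk (inW (k := k)) ℓ v ∧ v (Fin.last ℓ) = ν}

/-- `σ^{ν;*}_{k,ℓ}`: the number of loop-free `ℬ_{W_{k-1}}`-walks of length `ℓ`
ending at `ν`. -/
noncomputable def sigmaStarCount (k ℓ : ℕ) (ν : Pt k) : ℕ :=
  Nat.card {v : Fin (ℓ + 1) → Pt k //
    IsBWalk (inW (k := k)) ℓ v ∧ LoopFree v ∧ v (Fin.last ℓ) = ν}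

/-- `(a,b)` is an arc of the standard representation of the partition `P`:
`a < b`, `a` and `b` lie in a common block `B`, and no element of `B` lies
strictly between them. -/
def IsArc {N : ℕ} (P : Finpartition (Finset.univ : Finset (Fin N))) (a b : Fin N) : Prop :=
  a < b ∧ ∃ B ∈ P.parts, a ∈ B ∧ b ∈ B ∧ ∀ c ∈ B, ¬(a < c ∧ c < b)

/-- The partition `P` has a `k`-crossing: arcs `(i₁,j₁),…,(i_k,j_k)` with
`i₁ < ⋯ < i_k < j₁ < ⋯ < j_k`. -/
def PartitionHasKCrossing {N : ℕ} (k : ℕ)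
    (P : Finpartition (Finset.univ : Finset (Fin N))) : Prop :=
  ∃ ii jj : Fin k → Fin N, (∀ m, IsArc P (ii m) (jj m)) ∧
    StrictMono ii ∧ StrictMono jj ∧ ∀ m m', ii m < jj m'

/-- The partition `P` is `2`-regular: distinct elements of a common block differ
by at least `2`. -/
def TwoRegular {N : ℕ} (P : Finpartition (Finset.univ : Finset (Fin N))) : Prop :=
  ∀ B ∈ P.parts, ∀ x ∈ B, ∀ y ∈ B, x ≠ y → 2 ≤ |((x : ℕ) : ℤ) - ((y : ℕ) : ℤ)|

/-- A braid over `[N]`, given by its arc set: arcs `(i,j)` with `i ≤ j` (loops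
allowed), each vertex is the smaller endpoint of at most one arc and the larger
endpoint of at most one arc. -/
def IsBraid {N : ℕ} (A : Finset (Fin N × Fin N)) : Prop :=
  (∀ p ∈ A, p.1 ≤ p.2) ∧ (∀ p ∈ A, ∀ q ∈ A, p.1 = q.1 → p = q) ∧
    (∀ p ∈ A, ∀ q ∈ A, p.2 = q.2 → p = q)

/-- The braid with arc set `A` has a `k`-crossing: arcs `(i₁,j₁),…,(i_k,j_k)`
with `i₁ < ⋯ < i_k ≤ j₁ < ⋯ < j_k`. -/
def BraidHasKCrossing {N : ℕ} (k : ℕ) (A : Finset (Fin N × Fin N)) : Prop :=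
  ∃ ii jj : Fin k → Fin N, (∀ m, (ii m, jj m) ∈ A) ∧
    StrictMono ii ∧ StrictMono jj ∧ ∀ m m', ii m ≤ jj m'

/-- A braid is loop-free if it has no arc `(i,i)`. -/
def BraidLoopFree {N : ℕ} (A : Finset (Fin N × Fin N)) : Prop :=
  ∀ p ∈ A, p.1 ≠ p.2

namespace RefProof

variable {k ℓ : ℕ}

lemma delta_strictAnti : StrictAnti (delta k) := by
  intro i j hij
  unfold delta
  have : (i : ℤ) < (j : ℤ) := by exact_mod_cast hij
  linarith

lemma delta_injective : Function.Injective (delta k) :=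
  delta_strictAnti.injective

/-- A steplike vector: all coordinates in `[-1,1]`, at most one nonzero. -/
def Steplike (d : Pt k) : Prop :=
  (∀ i, -1 ≤ d i ∧ d i ≤ 1) ∧ ∀ i j, i ≠ j → d i = 0 ∨ d j = 0

lemma eVec_steplike (m : Fin k) : Steplike (eVec k m) := by
  constructor
  · intro i; unfold eVec; split <;> norm_num
  · intro i j hij
    unfold eVec
    by_cases h1 : (i : ℕ) + 1 = (m : ℕ)
    · right
      rw [if_neg (fun h2 => hij (Fin.ext (show (i:ℕ) = (j:ℕ) by omega)))]
    · left; rw [if_neg h1]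

lemma plusStep_steplike {d : Pt k} (h : plusStep d) : Steplike d := by
  obtain ⟨m, rfl⟩ := h; exact eVec_steplike m

lemma minusStep_steplike {d : Pt k} (h : minusStep d) : Steplike d := by
  obtain ⟨m, rfl⟩ := h
  obtain ⟨h1, h2⟩ := eVec_steplike (k := k) m
  constructor
  · intro i
    have := h1 i
    simp only [Pi.neg_apply]
    omega
  · intro i j hij
    rcases h2 i j hij with h | h <;> [left; right] <;> simp [h]

lemma walk_steplike {D : Pt k → Prop} {v : Fin (ℓ + 1) → Pt k}
    (hv : IsPWalk D ℓ v) {t : ℕ} (h : t + 1 < ℓ + 1) :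
    Steplike (v ⟨t + 1, h⟩ - v ⟨t, by omega⟩) := by
  rcases Nat.even_or_odd (t + 1) with he | ho
  · exact plusStep_steplike ((hv.2.2 t h).2 he)
  · exact minusStep_steplike ((hv.2.2 t h).1 ho)

lemma sub_comp (a b : Pt k) (σ : Fin (k - 1) → Fin (k - 1)) :
    (a - b) ∘ σ = a ∘ σ - b ∘ σ := rfl

lemma eVec_comp (σ : Equiv.Perm (Fin (k - 1))) (m : Fin k) :
    ∃ m', eVec k m ∘ ⇑σ = eVec k m' := by
  by_cases h : ∃ i : Fin (k - 1), (i : ℕ) + 1 = (m : ℕ)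
  · obtain ⟨i, hi⟩ := h
    have hlt : ((σ.symm i : ℕ) + 1) < k := by
      have h1 : ((σ.symm i : Fin (k-1)) : ℕ) < k - 1 := (σ.symm i).isLt
      have h2 : (i : ℕ) < k - 1 := i.isLt
      omega
    refine ⟨⟨(σ.symm i : ℕ) + 1, hlt⟩, ?_⟩
    funext j
    show eVec k m (σ j) = _
    unfold eVec
    by_cases hj : σ j = i
    · rw [if_pos (by rw [hj, hi]), if_pos]
      simp [← hj]
    · rw [if_neg, if_neg]
      · intro hc
        apply hj
        have : j = σ.symm i := Fin.ext (by simpa using hc)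
        rw [this]; simp
      · intro hc
        exact hj (Fin.ext (by omega))
  · refine ⟨m, ?_⟩
    funext j
    show eVec k m (σ j) = eVec k m j
    unfold eVec
    rw [if_neg (fun hc => h ⟨σ j, hc⟩), if_neg (fun hc => h ⟨j, hc⟩)]

lemma plusStep_comp {d : Pt k} (σ : Equiv.Perm (Fin (k - 1))) (h : plusStep d) :
    plusStep (d ∘ ⇑σ) := by
  obtain ⟨m, rfl⟩ := h
  obtain ⟨m', hm'⟩ := eVec_comp σ m
  exact ⟨m', hm'⟩

lemma minusStep_comp {d : Pt k} (σ : Equiv.Perm (Fin (k - 1))) (h : minusStep d) :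
    minusStep (d ∘ ⇑σ) := by
  obtain ⟨m, rfl⟩ := h
  obtain ⟨m', hm'⟩ := eVec_comp σ m
  exact ⟨m', by rw [← hm']; rfl⟩

end RefProof
namespace RefProof
open scoped Classical

variable {k ℓ : ℕ}

def badAt (v : Fin (ℓ + 1) → Pt k) (t : ℕ) : Prop :=
  ∃ h : t < ℓ + 1, ¬ Function.Injective (v ⟨t, h⟩)

lemma exists_col {w : Pt k} (h : ¬ Function.Injective w) :
    ∃ p : Fin (k - 1) × Fin (k - 1), p.1 ≠ p.2 ∧ w p.1 = w p.2 := by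
  rw [Function.Injective] at h
  push_neg at h
  obtain ⟨i, j, hij, hne⟩ := h
  exact ⟨(i, j), hne, hij⟩

noncomputable def colPair (w : Pt k) (h : ¬ Function.Injective w) :
    Fin (k - 1) × Fin (k - 1) := (exists_col h).choose

lemma colPair_spec (w : Pt k) (h : ¬ Function.Injective w) :
    (colPair w h).1 ≠ (colPair w h).2 ∧ w (colPair w h).1 = w (colPair w h).2 :=
  (exists_col h).choose_spec

lemma colPair_congr {w w' : Pt k} (e : w = w') (h : ¬ Function.Injective w)
    (h' : ¬ Function.Injective w') : colPair w h = colPair w' h' := by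
  subst e; rfl

section Reflect

variable {v : Fin (ℓ + 1) → Pt k}

noncomputable def t0 (hb : ∃ t, badAt v t) : ℕ := Nat.find hb

lemma t0_lt (hb : ∃ t, badAt v t) : t0 hb < ℓ + 1 := by
  obtain ⟨h, _⟩ := Nat.find_spec hb; exact h

noncomputable def wcol (hb : ∃ t, badAt v t) : Pt k := v ⟨t0 hb, t0_lt hb⟩

lemma wcol_not_inj (hb : ∃ t, badAt v t) : ¬ Function.Injective (wcol hb) := by
  obtain ⟨h, hni⟩ := Nat.find_spec hb; exact hni

lemma not_badAt_of_lt (hb : ∃ t, badAt v t) {t : ℕ} (h : t < t0 hb) : ¬ badAt v t :=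
  Nat.find_min hb h

noncomputable def tauP (hb : ∃ t, badAt v t) : Fin (k - 1) × Fin (k - 1) :=
  colPair (wcol hb) (wcol_not_inj hb)

noncomputable def tau (hb : ∃ t, badAt v t) : Equiv.Perm (Fin (k - 1)) :=
  Equiv.swap (tauP hb).1 (tauP hb).2

lemma tauP_ne (hb : ∃ t, badAt v t) : (tauP hb).1 ≠ (tauP hb).2 :=
  (colPair_spec _ _).1

lemma sign_tau (hb : ∃ t, badAt v t) : Equiv.Perm.sign (tau hb) = -1 :=
  Equiv.Perm.sign_swap (tauP_ne hb)

lemma wcol_comp_tau (hb : ∃ t, badAt v t) : wcol hb ∘ ⇑(tau hb) = wcol hb := by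
  have hcs := colPair_spec (wcol hb) (wcol_not_inj hb)
  funext x
  show wcol hb (tau hb x) = wcol hb x
  unfold tau
  rcases eq_or_ne x (tauP hb).1 with rfl | h1
  · rw [Equiv.swap_apply_left]; exact hcs.2.symm
  rcases eq_or_ne x (tauP hb).2 with rfl | h2
  · rw [Equiv.swap_apply_right]; exact hcs.2
  · rw [Equiv.swap_apply_of_ne_of_ne h1 h2]

noncomputable def reflect (hb : ∃ t, badAt v t) : Fin (ℓ + 1) → Pt k :=
  fun t => if (t : ℕ) < t0 hb then v t else v t ∘ ⇑(tau hb)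

lemma reflect_ge (hb : ∃ t, badAt v t) {t : Fin (ℓ + 1)} (h : t0 hb ≤ (t : ℕ)) :
    reflect hb t = v t ∘ ⇑(tau hb) := by
  unfold reflect; rw [if_neg (by omega)]

lemma reflect_le (hb : ∃ t, badAt v t) {t : Fin (ℓ + 1)} (h : (t : ℕ) ≤ t0 hb) :
    reflect hb t = v t := by
  rcases lt_or_eq_of_le h with h' | h'
  · unfold reflect; rw [if_pos h']
  · rw [reflect_ge hb (le_of_eq h'.symm)]
    have ht : t = ⟨t0 hb, t0_lt hb⟩ := Fin.ext h'
    rw [ht]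
    exact wcol_comp_tau hb

lemma reflect_isPWalk (hv : IsPWalk (inQ (k := k)) ℓ v) (hb : ∃ t, badAt v t) :
    IsPWalk (inQ (k := k)) ℓ (reflect hb) := by
  refine ⟨?_, ?_, ?_⟩
  · rw [reflect_le hb (by simp), hv.1]
  · intro t
    unfold reflect
    split
    · exact hv.2.1 t
    · intro i; exact hv.2.1 t (tau hb i)
  · intro t h
    rcases le_or_gt (t + 1) (t0 hb) with hle | hlt
    · rw [reflect_le hb (t := ⟨t + 1, h⟩) hle,
        reflect_le hb (t := ⟨t, by omega⟩) (by simpa using Nat.le_of_succ_le hle)]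
      exact hv.2.2 t h
    · have h1 : t0 hb ≤ t := by omega
      rw [reflect_ge hb (t := ⟨t + 1, h⟩) (by simpa using Nat.le_of_lt hlt),
        reflect_ge hb (t := ⟨t, by omega⟩) (by simpa using h1), ← sub_comp]
      constructor
      · intro ho; exact minusStep_comp _ ((hv.2.2 t h).1 ho)
      · intro he; exact plusStep_comp _ ((hv.2.2 t h).2 he)

lemma reflect_endpoint (hb : ∃ t, badAt v t) :
    reflect hb (Fin.last ℓ) = v (Fin.last ℓ) ∘ ⇑(tau hb) :=
  reflect_ge hb (by have := t0_lt hb; simp [Fin.last]; omega)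

lemma reflect_badAt_t0 (hb : ∃ t, badAt v t) : badAt (reflect hb) (t0 hb) := by
  refine ⟨t0_lt hb, ?_⟩
  rw [reflect_le hb (t := ⟨t0 hb, t0_lt hb⟩) (by simp)]
  exact wcol_not_inj hb

lemma reflect_bad (hb : ∃ t, badAt v t) : ∃ t, badAt (reflect hb) t :=
  ⟨t0 hb, reflect_badAt_t0 hb⟩

lemma t0_reflect (hb : ∃ t, badAt v t) (hb' : ∃ t, badAt (reflect hb) t) :
    t0 hb' = t0 hb := by
  refine le_antisymm (Nat.find_le (reflect_badAt_t0 hb)) ?_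
  by_contra hc
  push_neg at hc
  have hbad : badAt (reflect hb) (t0 hb') := Nat.find_spec hb'
  obtain ⟨hlt, hni⟩ := hbad
  rw [reflect_le hb (t := ⟨t0 hb', hlt⟩) (by simpa using Nat.le_of_lt hc)] at hni
  exact not_badAt_of_lt hb hc ⟨hlt, hni⟩

lemma wcol_reflect (hb : ∃ t, badAt v t) (hb' : ∃ t, badAt (reflect hb) t) :
    wcol hb' = wcol hb := by
  show reflect hb ⟨t0 hb', t0_lt hb'⟩ = wcol hb
  have he : (⟨t0 hb', t0_lt hb'⟩ : Fin (ℓ + 1)) = ⟨t0 hb, t0_lt hb⟩ :=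
    Fin.ext (t0_reflect hb hb')
  rw [he, reflect_le hb (by simp)]
  rfl

lemma tau_reflect (hb : ∃ t, badAt v t) (hb' : ∃ t, badAt (reflect hb) t) :
    tau hb' = tau hb := by
  unfold tau tauP
  rw [colPair_congr (wcol_reflect hb hb') (wcol_not_inj hb') (wcol_not_inj hb)]

lemma reflect_reflect (hb : ∃ t, badAt v t) (hb' : ∃ t, badAt (reflect hb) t) :
    reflect hb' = v := by
  funext t
  rcases lt_or_ge (t : ℕ) (t0 hb) with h | h
  · rw [reflect_le hb' (by rw [t0_reflect hb hb']; omega),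
      reflect_le hb (le_of_lt h)]
  · rw [reflect_ge hb' (by rw [t0_reflect hb hb']; omega), tau_reflect hb hb',
      reflect_ge hb h]
    funext x
    show v t (tau hb (tau hb x)) = v t x
    unfold tau
    rw [Equiv.swap_apply_self]

end Reflect

end RefProof
namespace RefProof

variable {k ℓ : ℕ} {v : Fin (ℓ + 1) → Pt k}

lemma strictAnti_of_good (hv : IsPWalk (inQ (k := k)) ℓ v)
    (hg : ∀ t, Function.Injective (v t)) (t : Fin (ℓ + 1)) : StrictAnti (v t) := by
  obtain ⟨m, hm⟩ := t
  induction m with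
  | zero => rw [show (⟨0, hm⟩ : Fin (ℓ + 1)) = ⟨0, Nat.succ_pos ℓ⟩ from rfl, hv.1]
            exact delta_strictAnti
  | succ p ih =>
    have hsa : StrictAnti (v ⟨p, by omega⟩) := ih (by omega)
    have hstep := walk_steplike hv (t := p) hm
    intro i j hij
    have h1 : v ⟨p, by omega⟩ j < v ⟨p, by omega⟩ i := hsa hij
    have hb1 := hstep.1 i
    have hb2 := hstep.1 j
    have hne : v ⟨p + 1, hm⟩ i ≠ v ⟨p + 1, hm⟩ j := fun e => absurd (hg _ e) (ne_of_lt hij)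
    have e1 : (v ⟨p + 1, hm⟩ - v ⟨p, by omega⟩) i = v ⟨p + 1, hm⟩ i - v ⟨p, by omega⟩ i := rfl
    have e2 : (v ⟨p + 1, hm⟩ - v ⟨p, by omega⟩) j = v ⟨p + 1, hm⟩ j - v ⟨p, by omega⟩ j := rfl
    rcases hstep.2 i j (ne_of_lt hij) with h0 | h0 <;> rw [e1] at hb1 <;> rw [e2] at hb2 <;>
      [rw [e1] at h0; rw [e2] at h0] <;> omega

set_option linter.deprecated false in
lemma strictMono_perm_eq_one {n : ℕ} (π : Equiv.Perm (Fin n)) (h : StrictMono ⇑π) :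
    π = 1 := by
  have : ⇑π = id := by
    refine (h.range_inj strictMono_id).1 ?_
    rw [Set.range_id, Set.range_eq_univ]
    exact π.surjective
  exact Equiv.ext fun x => congrFun this x

lemma perm_eq_one_of_strictAnti_comp {n : ℕ} {μ : Fin n → ℤ} (hμ : StrictAnti μ)
    (π : Equiv.Perm (Fin n)) (h : StrictAnti (μ ∘ ⇑π)) : π = 1 := by
  apply strictMono_perm_eq_one
  intro i j hij
  have h2 : μ (π j) < μ (π i) := h hij
  rcases lt_trichotomy (π i) (π j) with hc | hc | hc
  · exact hc
  · rw [hc] at h2; exact absurd h2 (lt_irrefl _)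
  · exact absurd (hμ hc) (not_lt.2 (le_of_lt h2))

lemma walk_bound {D : Pt k → Prop} (hv : IsPWalk D ℓ v) (t : Fin (ℓ + 1)) (i : Fin (k - 1)) :
    |v t i| ≤ 2 * (k : ℤ) + ℓ + 2 := by
  suffices H : ∀ m (hm : m < ℓ + 1), |v ⟨m, hm⟩ i| ≤ 2 * (k : ℤ) + m + 2 by
    have := H t t.isLt
    have h2 : (t : ℕ) ≤ ℓ := by omega
    have h3 : ((t : ℕ) : ℤ) ≤ (ℓ : ℤ) := by exact_mod_cast h2
    calc |v t i| = |v ⟨t, t.isLt⟩ i| := by rw [Fin.eta]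
    _ ≤ 2 * (k : ℤ) + (t : ℕ) + 2 := this
    _ ≤ 2 * (k : ℤ) + ℓ + 2 := by omega
  intro m
  induction m with
  | zero =>
    intro hm
    rw [show (⟨0, hm⟩ : Fin (ℓ + 1)) = ⟨0, Nat.succ_pos ℓ⟩ from rfl, hv.1]
    unfold delta
    have h1 : (i : ℕ) < k - 1 := i.isLt
    rw [abs_le]
    constructor <;> push_cast <;> omega
  | succ p ih =>
    intro hm
    have hb := ih (by omega)
    have hstep := walk_steplike hv (t := p) hm
    have hb1 := hstep.1 i
    have e1 : (v ⟨p + 1, hm⟩ - v ⟨p, by omega⟩) i = v ⟨p + 1, hm⟩ i - v ⟨p, by omega⟩ i := rfl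
    rw [e1] at hb1
    rw [abs_le] at *
    push_cast
    omega

lemma finite_walks (P : (Fin (ℓ + 1) → Pt k) → Prop)
    (hP : ∀ v, P v → ∀ t i, |v t i| ≤ 2 * (k : ℤ) + ℓ + 2) :
    Finite {v : Fin (ℓ + 1) → Pt k // P v} := by
  set B : ℤ := 2 * (k : ℤ) + ℓ + 2 with hB
  haveI : Finite (Set.Icc (-B) B) := (Set.finite_Icc _ _).to_subtype
  apply Finite.of_injective
    (f := fun (x : {v : Fin (ℓ + 1) → Pt k // P v}) =>
      (fun t i => (⟨x.1 t i, by
        rw [Set.mem_Icc]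
        have := hP x.1 x.2 t i
        rw [abs_le] at this
        exact this⟩ : Set.Icc (-B) B) : Fin (ℓ + 1) → Fin (k - 1) → Set.Icc (-B) B))
  intro a b h
  apply Subtype.ext
  funext t i
  exact congrArg Subtype.val (congrFun (congrFun h t) i)

end RefProof
namespace RefProof

variable (k ℓ : ℕ) (μ : Pt k)

abbrev Apt (π : Equiv.Perm (Fin (k - 1))) :=
  {v : Fin (ℓ + 1) → Pt k // IsPWalk (inQ (k := k)) ℓ v ∧ v (Fin.last ℓ) = μ ∘ ⇑π}

abbrev X := {x : Equiv.Perm (Fin (k - 1)) × (Fin (ℓ + 1) → Pt k) //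
  IsPWalk (inQ (k := k)) ℓ x.2 ∧ x.2 (Fin.last ℓ) = μ ∘ ⇑x.1}

noncomputable instance (π : Equiv.Perm (Fin (k - 1))) : Fintype (Apt k ℓ μ π) :=
  @Fintype.ofFinite _ (finite_walks _ (fun v hv => walk_bound hv.1))

lemma finite_X : Finite (X k ℓ μ) := by
  haveI : Finite {v : Fin (ℓ + 1) → Pt k // IsPWalk (inQ (k := k)) ℓ v} :=
    finite_walks _ (fun v hv => walk_bound hv)
  apply Finite.of_injective (f := fun (x : X k ℓ μ) =>
    ((x.1.1, ⟨x.1.2, x.2.1⟩) :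
      Equiv.Perm (Fin (k - 1)) × {v : Fin (ℓ + 1) → Pt k // IsPWalk (inQ (k := k)) ℓ v}))
  intro a b h
  simp only [Prod.mk.injEq, Subtype.mk.injEq] at h
  apply Subtype.ext
  rw [Prod.ext_iff]
  exact h

noncomputable instance : Fintype (X k ℓ μ) := @Fintype.ofFinite _ (finite_X k ℓ μ)

lemma bad_of {v : Fin (ℓ + 1) → Pt k} (h : ¬ ∀ t, Function.Injective (v t)) :
    ∃ t, badAt v t := by
  push_neg at h
  obtain ⟨t, ht⟩ := h
  exact ⟨t, t.isLt, by rwa [Fin.eta]⟩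

lemma good_perm (hμ : inW μ) (x : X k ℓ μ)
    (hg : ∀ t, Function.Injective (x.1.2 t)) : x.1.1 = 1 := by
  have hsa : StrictAnti (μ ∘ ⇑x.1.1) := x.2.2 ▸ strictAnti_of_good x.2.1 hg (Fin.last ℓ)
  exact perm_eq_one_of_strictAnti_comp hμ.1 _ hsa

lemma card_good (hμ : inW μ) :
    Nat.card {x : X k ℓ μ // ∀ t, Function.Injective (x.1.2 t)} = omegaCount k ℓ μ := by
  apply Nat.card_congr
  refine ⟨fun y => ⟨y.1.1.2, ?_, ?_⟩, fun w => ⟨⟨(1, w.1), ?_, ?_⟩, ?_⟩, ?_, ?_⟩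
  · exact ⟨y.1.2.1.1, fun t => ⟨strictAnti_of_good y.1.2.1 y.2 t, fun i => y.1.2.1.2.1 t i⟩,
      y.1.2.1.2.2⟩
  · rw [y.1.2.2, good_perm k ℓ μ hμ y.1 y.2]; rfl
  · exact ⟨w.2.1.1, fun t => fun i => (w.2.1.2.1 t).2 i, w.2.1.2.2⟩
  · exact w.2.2
  · exact fun t => (w.2.1.2.1 t).1.injective
  · rintro ⟨⟨⟨π, v⟩, hc⟩, hg⟩
    have h1 : π = 1 := good_perm k ℓ μ hμ ⟨(π, v), hc⟩ hg
    subst h1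
    rfl
  · rintro ⟨w, hw⟩
    rfl

noncomputable def reflX (x : X k ℓ μ) (hb : ∃ t, badAt x.1.2 t) : X k ℓ μ :=
  ⟨(x.1.1 * tau hb, reflect hb), reflect_isPWalk x.2.1 hb, by
    show reflect hb (Fin.last ℓ) = μ ∘ ⇑(x.1.1 * tau hb)
    rw [reflect_endpoint hb, x.2.2]
    rfl⟩

end RefProof

/-- the reflection-principle formula
`ω^μ_{k,ℓ} = Σ_{π ∈ S_{k-1}} sgn(π) a^{π(μ)}_{k,ℓ}`. -/
theorem omega_eq_signed_sum (k ℓ : ℕ) (hk : 3 ≤ k) (μ : Pt k) (hμ : inW μ) :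
    (omegaCount k ℓ μ : ℤ) =
      ∑ π : Equiv.Perm (Fin (k - 1)),
        (Equiv.Perm.sign π : ℤ) * (aCount k ℓ (μ ∘ π) : ℤ) := by
  classical
  open RefProof in
  have e1 : ∀ π : Equiv.Perm (Fin (k - 1)),
      (aCount k ℓ (μ ∘ ⇑π) : ℤ) = (Fintype.card (RefProof.Apt k ℓ μ π) : ℤ) := fun π => by
    rw [show aCount k ℓ (μ ∘ ⇑π) = Nat.card (RefProof.Apt k ℓ μ π) from rfl,
      Nat.card_eq_fintype_card]
  simp_rw [e1]
  have e2 : ∑ π : Equiv.Perm (Fin (k - 1)),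
        (Equiv.Perm.sign π : ℤ) * (Fintype.card (RefProof.Apt k ℓ μ π) : ℤ)
      = ∑ x : RefProof.X k ℓ μ, (Equiv.Perm.sign x.1.1 : ℤ) := by
    rw [Fintype.sum_equiv
      (Equiv.subtypeProdEquivSigmaSubtype
        (fun (π : Equiv.Perm (Fin (k - 1))) (v : Fin (ℓ + 1) → Pt k) =>
          IsPWalk (inQ (k := k)) ℓ v ∧ v (Fin.last ℓ) = μ ∘ ⇑π))
      (fun x => (Equiv.Perm.sign x.1.1 : ℤ))
      (fun y => (Equiv.Perm.sign y.1 : ℤ)) (fun x => rfl)]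
    rw [← Finset.univ_sigma_univ, Finset.sum_sigma]
    refine Finset.sum_congr rfl fun π _ => ?_
    have hc : ∀ s : {b // IsPWalk (inQ (k := k)) ℓ b ∧ b (Fin.last ℓ) = μ ∘ ⇑π},
        (Equiv.Perm.sign ((⟨π, s⟩ : Σ π : Equiv.Perm (Fin (k - 1)),
          {b // IsPWalk (inQ (k := k)) ℓ b ∧ b (Fin.last ℓ) = μ ∘ ⇑π}).fst) : ℤ)
          = (Equiv.Perm.sign π : ℤ) := fun _ => rfl
    rw [Finset.sum_congr rfl (fun s _ => hc s), Finset.sum_const, Finset.card_univ,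
      nsmul_eq_mul, mul_comm]
  rw [e2]
  have e3 : ∑ x : RefProof.X k ℓ μ, (Equiv.Perm.sign x.1.1 : ℤ)
      = ∑ x ∈ Finset.univ.filter
          (fun x : RefProof.X k ℓ μ => ∀ t, Function.Injective (x.1.2 t)),
          (Equiv.Perm.sign x.1.1 : ℤ)
      + ∑ x ∈ Finset.univ.filter
          (fun x : RefProof.X k ℓ μ => ¬ ∀ t, Function.Injective (x.1.2 t)),
          (Equiv.Perm.sign x.1.1 : ℤ) :=
    (Finset.sum_filter_add_sum_filter_not _ _ _).symm
  rw [e3]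
  have e4 : ∑ x ∈ Finset.univ.filter
        (fun x : RefProof.X k ℓ μ => ∀ t, Function.Injective (x.1.2 t)),
        (Equiv.Perm.sign x.1.1 : ℤ) = (omegaCount k ℓ μ : ℤ) := by
    have hone : ∀ x ∈ Finset.univ.filter
        (fun x : RefProof.X k ℓ μ => ∀ t, Function.Injective (x.1.2 t)),
        (Equiv.Perm.sign x.1.1 : ℤ) = 1 := fun x hx => by
      rw [RefProof.good_perm k ℓ μ hμ x ((Finset.mem_filter.1 hx).2)]
      simp
    rw [Finset.sum_congr rfl hone, Finset.sum_const, nsmul_eq_mul, mul_one]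
    norm_cast
    rw [← Fintype.card_subtype, ← Nat.card_eq_fintype_card, RefProof.card_good k ℓ μ hμ]
  have e5 : ∑ x ∈ Finset.univ.filter
        (fun x : RefProof.X k ℓ μ => ¬ ∀ t, Function.Injective (x.1.2 t)),
        (Equiv.Perm.sign x.1.1 : ℤ) = 0 := by
    refine Finset.sum_involution
      (fun x hx => RefProof.reflX k ℓ μ x
        (RefProof.bad_of k ℓ ((Finset.mem_filter.1 hx).2))) ?_ ?_ ?_ ?_
    · intro a ha
      show (Equiv.Perm.sign a.1.1 : ℤ)
        + (Equiv.Perm.sign (a.1.1 * RefProof.tau _) : ℤ) = 0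
      rw [Equiv.Perm.sign_mul, RefProof.sign_tau]
      push_cast
      ring
    · intro a ha hf he
      have h2 := congrArg (fun z : RefProof.X k ℓ μ => (Equiv.Perm.sign z.1.1 : ℤ)) he
      have h3 : (Equiv.Perm.sign a.1.1 : ℤ)
          + (Equiv.Perm.sign ((RefProof.reflX k ℓ μ a
              (RefProof.bad_of k ℓ ((Finset.mem_filter.1 ha).2))).1.1) : ℤ) = 0 := by
        show (Equiv.Perm.sign a.1.1 : ℤ)
          + (Equiv.Perm.sign (a.1.1 * RefProof.tau _) : ℤ) = 0
        rw [Equiv.Perm.sign_mul, RefProof.sign_tau]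
        push_cast
        ring
      rw [h2] at h3
      omega
    · intro a ha
      rw [Finset.mem_filter]
      refine ⟨Finset.mem_univ _, ?_⟩
      intro hgood
      set hb := RefProof.bad_of k ℓ ((Finset.mem_filter.1 ha).2)
      obtain ⟨hlt, hni⟩ := RefProof.reflect_badAt_t0 hb
      exact hni (hgood ⟨RefProof.t0 hb, hlt⟩)
    · intro a ha
      set hb := RefProof.bad_of k ℓ ((Finset.mem_filter.1 ha).2) with hbdef
      apply Subtype.ext
      rw [Prod.ext_iff]
      constructor
      · show a.1.1 * RefProof.tau hb * RefProof.tau (v := RefProof.reflect hb) _ = a.1.1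
        rw [RefProof.tau_reflect hb (RefProof.reflect_bad hb), mul_assoc]
        show a.1.1 * (Equiv.swap _ _ * Equiv.swap _ _) = a.1.1
        rw [Equiv.swap_mul_self, mul_one]
      · show RefProof.reflect _ = a.1.2
        exact RefProof.reflect_reflect hb _
  rw [e4, e5, add_zero]
end

section
/- Fix an integer k ≥ 3, an integer ℓ ≥ 0, and ν ∈ W_{k−1}. Then ω^ν_{k,2ℓ+1} = σ^ν_{k,2ℓ}; that is, the number of P_{W_{k−1}}-walks of length 2ℓ+1 ending at ν equals the number of B_{W_{k−1}}-walks of length 2ℓ ending at ν. -/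
open Finset

lemma eVec_eq_zero {k : ℕ} (i : Fin k) (hi : (i : ℕ) = 0) : eVec k i = 0 := by
  funext j
  simp [eVec, hi]

lemma inW_delta {k : ℕ} (hk : 3 ≤ k) : inW (delta k) := by
  constructor
  · intro a b hab
    have h1 : (a : ℕ) < (b : ℕ) := hab
    simp only [delta]
    omega
  · intro i
    have h1 : (i : ℕ) < k - 1 := i.isLt
    simp only [delta]
    omega

lemma sub_eVec_inW {k : ℕ} (hk : 3 ≤ k) (i : Fin k)
    (h : inW (delta k - eVec k i)) : eVec k i = 0 := by
  rcases Nat.eq_zero_or_pos (i : ℕ) with hi | hi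
  · exact eVec_eq_zero i hi
  exfalso
  have hik : (i : ℕ) < k := i.isLt
  have hj0 : (i : ℕ) - 1 < k - 1 := by omega
  have hval0 : (delta k - eVec k i) ⟨(i : ℕ) - 1, hj0⟩ = (k : ℤ) - 2 - ((i:ℕ) : ℤ) := by
    simp only [Pi.sub_apply, delta, eVec]
    have h1 : ((i:ℕ) - 1) + 1 = (i:ℕ) := by omega
    rw [if_pos h1]
    have h2 : (((⟨(i : ℕ) - 1, hj0⟩ : Fin (k-1)) : ℕ) : ℤ) = ((i:ℕ) : ℤ) - 1 := by
      simp only [Fin.val_mk]; omega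
    rw [h2]; ring
  rcases Nat.lt_or_ge ((i:ℕ)) (k - 1) with hlt | hge
  · -- coordinate i exists; v(i-1) = v(i), contradicting StrictAnti
    have hval1 : (delta k - eVec k i) ⟨(i : ℕ), hlt⟩ = (k : ℤ) - 2 - ((i:ℕ) : ℤ) := by
      simp only [Pi.sub_apply, delta, eVec]
      rw [if_neg (by omega)]
      ring
    have hmono := h.1 (show (⟨(i:ℕ) - 1, hj0⟩ : Fin (k-1)) < ⟨(i:ℕ), hlt⟩ from by
      simp only [Fin.mk_lt_mk]; omega)
    rw [hval0, hval1] at hmono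
    omega
  · -- i = k-1; last coordinate becomes -1
    have hnn := h.2 ⟨(i : ℕ) - 1, hj0⟩
    rw [hval0] at hnn
    omega

lemma pwalk_tail {k ℓ : ℕ} (hk : 3 ≤ k) (v : Fin (2 * ℓ + 1 + 1) → Pt k)
    (hv : IsPWalk (inW (k := k)) (2 * ℓ + 1) v) :
    IsBWalk (inW (k := k)) (2 * ℓ) (fun t => v t.succ) := by
  obtain ⟨h0, hD, hstep⟩ := hv
  have h1 : v ⟨1, by omega⟩ = delta k := by
    obtain ⟨i, hi⟩ := (hstep 0 (by omega)).1 ⟨0, by ring⟩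
    rw [h0] at hi
    have hv1 : v ⟨1, by omega⟩ = delta k - eVec k i := by
      have h3 := sub_eq_iff_eq_add.mp hi
      rw [h3]; abel
    have hz : eVec k i = 0 := sub_eVec_inW hk i (hv1 ▸ hD ⟨1, by omega⟩)
    rw [hv1, hz, sub_zero]
  refine ⟨?_, fun t => hD t.succ, fun t ht => ⟨?_, ?_⟩⟩
  · exact h1
  · intro hodd
    have heven : Even (t + 1 + 1) := by
      rw [Nat.even_iff]; rw [Nat.odd_iff] at hodd; omega
    exact (hstep (t + 1) (by omega)).2 heven
  · intro heven
    have hodd : Odd (t + 1 + 1) := by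
      rw [Nat.odd_iff]; rw [Nat.even_iff] at heven; omega
    exact (hstep (t + 1) (by omega)).1 hodd

lemma bwalk_cons {k ℓ : ℕ} (hk : 3 ≤ k) (w : Fin (2 * ℓ + 1) → Pt k)
    (hw : IsBWalk (inW (k := k)) (2 * ℓ) w) :
    IsPWalk (inW (k := k)) (2 * ℓ + 1) (Fin.cases (delta k) w) := by
  obtain ⟨h0, hD, hstep⟩ := hw
  refine ⟨?_, ?_, fun t ht => ⟨?_, ?_⟩⟩
  · beta_reduce
    rw [show (⟨0, Nat.succ_pos _⟩ : Fin (2 * ℓ + 1 + 1)) = 0 from Fin.mk_zero,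
      Fin.cases_zero]
  · intro t
    beta_reduce
    induction t using Fin.cases with
    | zero => rw [Fin.cases_zero]; exact inW_delta hk
    | succ i => rw [Fin.cases_succ]; exact hD i
  · intro hodd
    beta_reduce
    match t, ht with
    | 0, ht =>
      rw [show (⟨0 + 1, ht⟩ : Fin (2 * ℓ + 1 + 1)) = (⟨0, by omega⟩ : Fin (2 * ℓ + 1)).succ
          from rfl, Fin.cases_succ,
        show (⟨0, by omega⟩ : Fin (2 * ℓ + 1 + 1)) = 0 from Fin.mk_zero, Fin.cases_zero, h0]
      exact ⟨⟨0, by omega⟩, by rw [eVec_eq_zero ⟨0, by omega⟩ rfl]; simp⟩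
    | (s + 1), ht =>
      rw [show (⟨s + 1 + 1, ht⟩ : Fin (2 * ℓ + 1 + 1))
            = (⟨s + 1, by omega⟩ : Fin (2 * ℓ + 1)).succ from rfl, Fin.cases_succ,
        show (⟨s + 1, by omega⟩ : Fin (2 * ℓ + 1 + 1))
            = (⟨s, by omega⟩ : Fin (2 * ℓ + 1)).succ from rfl, Fin.cases_succ]
      have heven : Even (s + 1) := by
        rw [Nat.even_iff]; rw [Nat.odd_iff] at hodd; omega
      exact (hstep s (by omega)).2 heven
  · intro heven
    beta_reduce
    match t, ht with
    | 0, ht => exact absurd heven (by simp)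
    | (s + 1), ht =>
      rw [show (⟨s + 1 + 1, ht⟩ : Fin (2 * ℓ + 1 + 1))
            = (⟨s + 1, by omega⟩ : Fin (2 * ℓ + 1)).succ from rfl, Fin.cases_succ,
        show (⟨s + 1, by omega⟩ : Fin (2 * ℓ + 1 + 1))
            = (⟨s, by omega⟩ : Fin (2 * ℓ + 1)).succ from rfl, Fin.cases_succ]
      have hodd : Odd (s + 1) := by
        rw [Nat.odd_iff]; rw [Nat.even_iff] at heven; omega
      exact (hstep s (by omega)).1 hodd

/-- `ω^ν_{k,2ℓ+1} = σ^ν_{k,2ℓ}`. -/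
theorem omega_odd_eq_sigma_even (k ℓ : ℕ) (hk : 3 ≤ k) (ν : Pt k) (hν : inW ν) :
    omegaCount k (2 * ℓ + 1) ν = sigmaCount k (2 * ℓ) ν := by
  apply Nat.card_congr
  refine
    { toFun := fun x => ⟨fun t => x.1 t.succ, pwalk_tail hk x.1 x.2.1, ?_⟩
      invFun := fun x => ⟨Fin.cases (delta k) x.1, bwalk_cons hk x.1 x.2.1, ?_⟩
      left_inv := ?_
      right_inv := ?_ }
  · show x.1 (Fin.last (2 * ℓ)).succ = ν
    rw [Fin.succ_last]
    exact x.2.2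
  · show Fin.cases (motive := fun _ => Pt k) (delta k) x.1 (Fin.last (2 * ℓ + 1)) = ν
    rw [show Fin.last (2 * ℓ + 1) = (Fin.last (2 * ℓ)).succ from (Fin.succ_last _).symm,
      Fin.cases_succ]
    exact x.2.2
  · rintro ⟨v, ⟨h0, hD, hstep⟩, hend⟩
    apply Subtype.ext
    show Fin.cases (delta k) (fun t => v t.succ) = v
    funext t
    induction t using Fin.cases with
    | zero =>
      rw [Fin.cases_zero, ← h0]
      congr 1
    | succ i => rw [Fin.cases_succ]
  · rintro ⟨w, hw, hend⟩
    apply Subtype.ext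
    show (fun t => Fin.cases (motive := fun _ => Pt k) (delta k) w t.succ) = w
    funext t
    exact Fin.cases_succ t
end

section
/- Fix an integer k ≥ 3 and N ≥ 1. The number of k-noncrossing partitions of [N] equals the number of k-noncrossing braids over [N−1]. -/
open Finset

section ArcBijection

open Relation

variable {N n : ℕ}

/-- The step relation of a finite arc set. -/
def ArcStep (M : Finset (Fin N × Fin N)) (a b : Fin N) : Prop := (a, b) ∈ M

/-- A matching: strict arcs, each vertex smaller endpoint of at most one arc and
larger endpoint of at most one arc. -/
def IsMatching (M : Finset (Fin N × Fin N)) : Prop :=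
  (∀ p ∈ M, p.1 < p.2) ∧ (∀ p ∈ M, ∀ q ∈ M, p.1 = q.1 → p = q) ∧
    (∀ p ∈ M, ∀ q ∈ M, p.2 = q.2 → p = q)

namespace IsMatching

variable {M : Finset (Fin N × Fin N)} (hM : IsMatching M)
include hM

lemma step_lt {a b : Fin N} (h : ArcStep M a b) : a < b := hM.1 _ h

lemma rightUnique : Relator.RightUnique (ArcStep M) := by
  intro a b c hb hc
  have := hM.2.1 _ hb _ hc rfl
  exact congrArg Prod.snd this

lemma leftUnique : Relator.RightUnique (Function.swap (ArcStep M)) := by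
  intro a b c hb hc
  have := hM.2.2 _ hb _ hc rfl
  exact congrArg Prod.fst this

lemma reach_le {a b : Fin N} (h : ReflTransGen (ArcStep M) a b) : a ≤ b := by
  induction h with
  | refl => exact le_refl a
  | tail _ hstep ih => exact le_trans ih (le_of_lt (hM.step_lt hstep))

lemma reach_total {a b c : Fin N} (hab : ReflTransGen (ArcStep M) a b)
    (hac : ReflTransGen (ArcStep M) a c) :
    ReflTransGen (ArcStep M) b c ∨ ReflTransGen (ArcStep M) c b :=
  ReflTransGen.total_of_right_unique hM.rightUnique hab hac

lemma reach_cototal {a b c : Fin N} (hac : ReflTransGen (ArcStep M) a c)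
    (hbc : ReflTransGen (ArcStep M) b c) :
    ReflTransGen (ArcStep M) a b ∨ ReflTransGen (ArcStep M) b a := by
  have h1 : ReflTransGen (Function.swap (ArcStep M)) c a := reflTransGen_swap.mpr hac
  have h2 : ReflTransGen (Function.swap (ArcStep M)) c b := reflTransGen_swap.mpr hbc
  rcases ReflTransGen.total_of_right_unique hM.leftUnique h1 h2 with h | h
  · exact Or.inr (reflTransGen_swap.mp h)
  · exact Or.inl (reflTransGen_swap.mp h)

lemma reach_eqvGen {a b : Fin N} (h : ReflTransGen (ArcStep M) a b) :
    EqvGen (ArcStep M) a b := by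
  induction h with
  | refl => exact EqvGen.refl a
  | tail _ hstep ih => exact EqvGen.trans _ _ _ ih (EqvGen.rel _ _ hstep)

lemma eqvGen_iff {a b : Fin N} :
    EqvGen (ArcStep M) a b ↔
      ReflTransGen (ArcStep M) a b ∨ ReflTransGen (ArcStep M) b a := by
  constructor
  · intro h
    induction h with
    | rel x y h => exact Or.inl (ReflTransGen.single h)
    | refl x => exact Or.inl ReflTransGen.refl
    | symm x y _ ih => exact ih.symm
    | trans x y z _ _ ih1 ih2 =>
      rcases ih1 with h1 | h1 <;> rcases ih2 with h2 | h2
      · exact Or.inl (h1.trans h2)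
      · exact hM.reach_cototal h1 h2
      · exact hM.reach_total h1 h2
      · exact Or.inr (h2.trans h1)
  · rintro (h | h)
    · exact hM.reach_eqvGen h
    · exact EqvGen.symm _ _ (hM.reach_eqvGen h)

lemma eqvGen_reach {a b : Fin N} (h : EqvGen (ArcStep M) a b) (hab : a < b) :
    ReflTransGen (ArcStep M) a b := by
  rcases hM.eqvGen_iff.mp h with h' | h'
  · exact h'
  · exact absurd (hM.reach_le h') (not_le.mpr hab)

/-- Arc characterization inside a matching: `(a,b) ∈ M` iff `a < b`, `a` and `b`
are connected, and nothing connected to `a` lies strictly between them. -/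
lemma arc_iff {a b : Fin N} :
    (a, b) ∈ M ↔ a < b ∧ EqvGen (ArcStep M) a b ∧
      ∀ c, EqvGen (ArcStep M) a c → ¬(a < c ∧ c < b) := by
  constructor
  · intro h
    refine ⟨hM.step_lt h, EqvGen.rel _ _ h, ?_⟩
    rintro c hc ⟨hac, hcb⟩
    have hr : ReflTransGen (ArcStep M) a c := hM.eqvGen_reach hc hac
    rcases hr.cases_head with rfl | ⟨d, hd, hdc⟩
    · exact lt_irrefl _ hac
    · have hdb : d = b := hM.rightUnique hd h
      subst hdb
      exact absurd hcb (not_lt.mpr (hM.reach_le hdc))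
  · rintro ⟨hab, heq, hbet⟩
    have hr : ReflTransGen (ArcStep M) a b := hM.eqvGen_reach heq hab
    rcases hr.cases_head with rfl | ⟨d, hd, hdb⟩
    · exact absurd hab (lt_irrefl _)
    · have hd_le : d ≤ b := hM.reach_le hdb
      have hda : a < d := hM.step_lt hd
      have hdbe : d = b := by
        by_contra hne
        exact hbet d (EqvGen.rel _ _ hd) ⟨hda, lt_of_le_of_ne hd_le hne⟩
      exact hdbe ▸ hd

end IsMatching

/-- `a` and `b` lie in a common block of `P`. -/
def SameBlock (P : Finpartition (Finset.univ : Finset (Fin N))) (a b : Fin N) : Prop :=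
  ∃ B ∈ P.parts, a ∈ B ∧ b ∈ B

variable {P P₁ P₂ : Finpartition (Finset.univ : Finset (Fin N))}

lemma sameBlock_refl (a : Fin N) : SameBlock P a a := by
  obtain ⟨B, hB, haB⟩ := P.exists_mem (Finset.mem_univ a)
  exact ⟨B, hB, haB, haB⟩

lemma sameBlock_symm {a b : Fin N} (h : SameBlock P a b) : SameBlock P b a := by
  obtain ⟨B, hB, haB, hbB⟩ := h
  exact ⟨B, hB, hbB, haB⟩

lemma sameBlock_trans {a b c : Fin N} (h1 : SameBlock P a b) (h2 : SameBlock P b c) :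
    SameBlock P a c := by
  obtain ⟨B, hB, haB, hbB⟩ := h1
  obtain ⟨C, hC, hbC, hcC⟩ := h2
  have : B = C := P.eq_of_mem_parts hB hC hbB hbC
  exact ⟨B, hB, haB, this ▸ hcC⟩

lemma mem_iff_sameBlock {B : Finset (Fin N)} (hB : B ∈ P.parts) {a : Fin N} (haB : a ∈ B)
    {x : Fin N} : x ∈ B ↔ SameBlock P a x := by
  constructor
  · intro hx
    exact ⟨B, hB, haB, hx⟩
  · rintro ⟨C, hC, haC, hxC⟩
    have : C = B := P.eq_of_mem_parts hC hB haC haB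
    exact this ▸ hxC

lemma sameBlock_iff_mem_part {a b : Fin N} : SameBlock P a b ↔ b ∈ P.part a := by
  constructor
  · rintro ⟨B, hB, haB, hbB⟩
    have : P.part a = B := P.part_eq_of_mem hB haB
    exact this ▸ hbB
  · intro h
    exact ⟨P.part a, P.part_mem.mpr (Finset.mem_univ a), P.mem_part (Finset.mem_univ a), h⟩

/-- `IsArc` rephrased via `SameBlock`. -/
lemma isArc_iff {a b : Fin N} :
    IsArc P a b ↔ a < b ∧ SameBlock P a b ∧ ∀ c, SameBlock P a c → ¬(a < c ∧ c < b) := by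
  constructor
  · rintro ⟨hab, B, hB, haB, hbB, hno⟩
    refine ⟨hab, ⟨B, hB, haB, hbB⟩, ?_⟩
    intro c hc
    exact hno c ((mem_iff_sameBlock hB haB).mpr hc)
  · rintro ⟨hab, ⟨B, hB, haB, hbB⟩, hno⟩
    exact ⟨hab, B, hB, haB, hbB, fun c hcB => hno c ⟨B, hB, haB, hcB⟩⟩

private lemma sameBlock_eqvGen_aux :
    ∀ d : ℕ, ∀ a b : Fin N, (b : ℕ) - (a : ℕ) ≤ d → a < b → SameBlock P a b →
      EqvGen (fun x y => IsArc P x y) a b := by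
  intro d
  induction d with
  | zero =>
    intro a b hd hab _
    have := Fin.lt_def.mp hab
    omega
  | succ d ih =>
    rintro a b hd hab ⟨B, hB, haB, hbB⟩
    by_cases hc : ∃ c ∈ B, a < c ∧ c < b
    · obtain ⟨c, hcB, h1, h2⟩ := hc
      have v1 := Fin.lt_def.mp h1
      have v2 := Fin.lt_def.mp h2
      refine EqvGen.trans _ c _ ?_ ?_
      · exact ih a c (by omega) h1 ⟨B, hB, haB, hcB⟩
      · exact ih c b (by omega) h2 ⟨B, hB, hcB, hbB⟩
    · refine EqvGen.rel _ _ ⟨hab, B, hB, haB, hbB, ?_⟩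
      intro c hcB h
      exact hc ⟨c, hcB, h⟩

lemma sameBlock_iff_eqvGen {a b : Fin N} :
    SameBlock P a b ↔ EqvGen (fun x y => IsArc P x y) a b := by
  constructor
  · intro h
    rcases lt_trichotomy a b with hab | rfl | hab
    · exact sameBlock_eqvGen_aux ((b : ℕ) - (a : ℕ)) a b le_rfl hab h
    · exact EqvGen.refl a
    · exact EqvGen.symm _ _
        (sameBlock_eqvGen_aux ((a : ℕ) - (b : ℕ)) b a le_rfl hab (sameBlock_symm h))
  · intro h
    induction h with
    | rel x y h => obtain ⟨_, B, hB, hx, hy, _⟩ := h; exact ⟨B, hB, hx, hy⟩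
    | refl x => exact sameBlock_refl x
    | symm x y _ ih => exact sameBlock_symm ih
    | trans x y z _ _ ih1 ih2 => exact sameBlock_trans ih1 ih2

/-- The arc set of a partition. -/
noncomputable def arcSet (P : Finpartition (Finset.univ : Finset (Fin N))) :
    Finset (Fin N × Fin N) :=
  @Finset.filter _ (fun p => IsArc P p.1 p.2) (Classical.decPred _) Finset.univ

lemma mem_arcSet {p : Fin N × Fin N} : p ∈ arcSet P ↔ IsArc P p.1 p.2 := by
  classical
  simp [arcSet]

lemma mem_arcSet' {a b : Fin N} : (a, b) ∈ arcSet P ↔ IsArc P a b := mem_arcSet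

private lemma isArc_right_unique_aux {a b b' : Fin N} (h1 : IsArc P a b) (h2 : IsArc P a b')
    (hlt : b < b') : False := by
  obtain ⟨hab, B, hB, haB, hbB, _⟩ := h1
  obtain ⟨hab', B', hB', haB', hb'B', hno'⟩ := h2
  have hBB : B = B' := P.eq_of_mem_parts hB hB' haB haB'
  exact hno' b (hBB ▸ hbB) ⟨hab, hlt⟩

private lemma isArc_left_unique_aux {a a' b : Fin N} (h1 : IsArc P a b) (h2 : IsArc P a' b)
    (hlt : a < a') : False := by
  obtain ⟨hab, B, hB, haB, hbB, hno⟩ := h1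
  obtain ⟨hab', B', hB', ha'B', hb'B', _⟩ := h2
  have hBB : B' = B := P.eq_of_mem_parts hB' hB hb'B' hbB
  exact hno a' (hBB ▸ ha'B') ⟨hlt, hab'⟩

lemma arcSet_isMatching : IsMatching (arcSet P) := by
  refine ⟨?_, ?_, ?_⟩
  · intro p hp
    exact (mem_arcSet.mp hp).1
  · intro p hp q hq h
    have h1 := mem_arcSet.mp hp
    have h2 := mem_arcSet.mp hq
    rw [h] at h1
    rcases lt_trichotomy p.2 q.2 with hlt | heq | hlt
    · exact absurd (isArc_right_unique_aux h1 h2 hlt) id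
    · exact Prod.ext h heq
    · exact absurd (isArc_right_unique_aux h2 h1 hlt) id
  · intro p hp q hq h
    have h1 := mem_arcSet.mp hp
    have h2 := mem_arcSet.mp hq
    rw [h] at h1
    rcases lt_trichotomy p.1 q.1 with hlt | heq | hlt
    · exact absurd (isArc_left_unique_aux h1 h2 hlt) id
    · exact Prod.ext heq h
    · exact absurd (isArc_left_unique_aux h2 h1 hlt) id

lemma arcStep_arcSet : ArcStep (arcSet P) = fun x y => IsArc P x y := by
  funext x y
  exact propext mem_arcSet'

lemma eq_of_sameBlock_iff (h : ∀ a b, SameBlock P₁ a b ↔ SameBlock P₂ a b) : P₁ = P₂ := by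
  have key : ∀ Q R : Finpartition (Finset.univ : Finset (Fin N)),
      (∀ a b, SameBlock Q a b ↔ SameBlock R a b) → Q.parts ⊆ R.parts := by
    intro Q R h B hB
    obtain ⟨a, haB⟩ := Q.nonempty_of_mem_parts hB
    have hBpart : B = R.part a := by
      ext x
      rw [mem_iff_sameBlock hB haB, h, sameBlock_iff_mem_part]
    rw [hBpart]
    exact R.part_mem.mpr (Finset.mem_univ a)
  exact Finpartition.ext (Finset.Subset.antisymm (key _ _ h) (key _ _ fun a b => (h a b).symm))

lemma arcSet_injective :
    Function.Injective (arcSet (N := N)) := by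
  intro P₁ P₂ h
  apply eq_of_sameBlock_iff
  intro a b
  rw [sameBlock_iff_eqvGen, sameBlock_iff_eqvGen]
  have harc : (fun x y => IsArc P₁ x y) = fun x y => IsArc P₂ x y := by
    funext x y
    exact propext (by rw [← mem_arcSet', h, mem_arcSet'])
  rw [harc]

/-- The partition generated by a matching `M` (equivalence classes of the
connectivity relation). -/
noncomputable def partitionOf (M : Finset (Fin N × Fin N)) :
    Finpartition (Finset.univ : Finset (Fin N)) :=
  letI : DecidableRel ⇑(EqvGen.setoid (ArcStep M)) := Classical.decRel _
  Finpartition.ofSetoid (EqvGen.setoid (ArcStep M))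

lemma sameBlock_partitionOf {M : Finset (Fin N × Fin N)} {a b : Fin N} :
    SameBlock (partitionOf M) a b ↔ EqvGen (ArcStep M) a b := by
  rw [sameBlock_iff_mem_part]
  unfold partitionOf
  letI : DecidableRel ⇑(EqvGen.setoid (ArcStep M)) := Classical.decRel _
  exact Finpartition.mem_part_ofSetoid_iff_rel

lemma isArc_partitionOf {M : Finset (Fin N × Fin N)} (hM : IsMatching M) {a b : Fin N} :
    IsArc (partitionOf M) a b ↔ (a, b) ∈ M := by
  rw [isArc_iff, hM.arc_iff]
  simp only [sameBlock_partitionOf]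

lemma arcSet_partitionOf {M : Finset (Fin N × Fin N)} (hM : IsMatching M) :
    arcSet (partitionOf M) = M := by
  ext p
  cases p with
  | mk a b => rw [mem_arcSet]; exact isArc_partitionOf hM

/-- Lift a braid arc set on `Fin n` to an arc set on `Fin (n+1)`:
`(i, j) ↦ (i, j+1)`. -/
def upSet (A : Finset (Fin n × Fin n)) : Finset (Fin (n + 1) × Fin (n + 1)) :=
  A.image fun p => (p.1.castSucc, p.2.succ)

lemma mem_upSet {A : Finset (Fin n × Fin n)} {a b : Fin (n + 1)} :
    (a, b) ∈ upSet A ↔ ∃ i j, (i, j) ∈ A ∧ a = i.castSucc ∧ b = j.succ := by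
  simp only [upSet, Finset.mem_image, Prod.ext_iff]
  constructor
  · rintro ⟨p, hp, h1, h2⟩
    exact ⟨p.1, p.2, hp, h1.symm, h2.symm⟩
  · rintro ⟨i, j, hij, h1, h2⟩
    exact ⟨(i, j), hij, h1.symm, h2.symm⟩

private lemma up_injective :
    Function.Injective (fun p : Fin n × Fin n => ((p.1.castSucc : Fin (n + 1)), p.2.succ)) := by
  rintro ⟨a, b⟩ ⟨c, d⟩ h
  simp only [Prod.mk.injEq] at h
  exact Prod.ext (Fin.castSucc_injective _ h.1) (Fin.succ_injective _ h.2)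

lemma upSet_injective : Function.Injective (upSet (n := n)) :=
  Finset.image_injective up_injective

lemma upSet_isMatching {A : Finset (Fin n × Fin n)} (hA : IsBraid A) :
    IsMatching (upSet A) := by
  obtain ⟨hle, hfst, hsnd⟩ := hA
  refine ⟨?_, ?_, ?_⟩
  · intro p hp
    obtain ⟨q, hq, rfl⟩ := Finset.mem_image.mp hp
    exact Fin.castSucc_lt_succ_iff.mpr (hle q hq)
  · intro p hp q hq h
    obtain ⟨p', hp', rfl⟩ := Finset.mem_image.mp hp
    obtain ⟨q', hq', rfl⟩ := Finset.mem_image.mp hq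
    have : p'.1 = q'.1 := Fin.castSucc_injective _ h
    have hpq : p' = q' := hfst p' hp' q' hq' this
    rw [hpq]
  · intro p hp q hq h
    obtain ⟨p', hp', rfl⟩ := Finset.mem_image.mp hp
    obtain ⟨q', hq', rfl⟩ := Finset.mem_image.mp hq
    have : p'.2 = q'.2 := Fin.succ_injective _ h
    have hpq : p' = q' := hsnd p' hp' q' hq' this
    rw [hpq]

/-- The braid arc set obtained from a matching on `Fin (n+1)`. -/
def downSet (M : Finset (Fin (n + 1) × Fin (n + 1))) : Finset (Fin n × Fin n) :=
  Finset.univ.filter fun p : Fin n × Fin n => (p.1.castSucc, p.2.succ) ∈ M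

lemma mem_downSet {M : Finset (Fin (n + 1) × Fin (n + 1))} {p : Fin n × Fin n} :
    p ∈ downSet M ↔ (p.1.castSucc, p.2.succ) ∈ M := by
  simp [downSet]

lemma upSet_downSet {M : Finset (Fin (n + 1) × Fin (n + 1))}
    (hlt : ∀ p ∈ M, p.1 < p.2) : upSet (downSet M) = M := by
  ext p
  cases p with
  | mk a b =>
    rw [mem_upSet]
    constructor
    · rintro ⟨i, j, hij, rfl, rfl⟩
      exact mem_downSet.mp hij
    · intro h
      have h1 := hlt _ h
      have hv : (a : ℕ) < (b : ℕ) := Fin.lt_def.mp h1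
      have hbn := b.isLt
      have han := a.isLt
      have ha : (a : ℕ) < n := by omega
      have hb : 0 < (b : ℕ) := by omega
      have hbn' : (b : ℕ) - 1 < n := by omega
      refine ⟨⟨(a : ℕ), ha⟩, ⟨(b : ℕ) - 1, hbn'⟩, ?_, ?_, ?_⟩
      · rw [mem_downSet]
        have e1 : (⟨(a : ℕ), ha⟩ : Fin n).castSucc = a := Fin.ext rfl
        have e2 : (⟨(b : ℕ) - 1, hbn'⟩ : Fin n).succ = b := Fin.ext (by
          simp [Fin.val_succ]; omega)
        rw [e1, e2]
        exact h
      · exact Fin.ext rfl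
      · exact Fin.ext (by simp [Fin.val_succ]; omega)

lemma downSet_isBraid {M : Finset (Fin (n + 1) × Fin (n + 1))} (hM : IsMatching M) :
    IsBraid (downSet M) := by
  obtain ⟨hlt, hfst, hsnd⟩ := hM
  refine ⟨?_, ?_, ?_⟩
  · intro p hp
    have := hlt _ (mem_downSet.mp hp)
    exact Fin.castSucc_lt_succ_iff.mp this
  · intro p hp q hq h
    have h1 := mem_downSet.mp hp
    have h2 := mem_downSet.mp hq
    have : (p.1.castSucc, p.2.succ) = (q.1.castSucc, q.2.succ) :=
      hfst _ h1 _ h2 (by rw [h])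
    have h2' : p.2.succ = q.2.succ := congrArg Prod.snd this
    exact Prod.ext h (Fin.succ_injective _ h2')
  · intro p hp q hq h
    have h1 := mem_downSet.mp hp
    have h2 := mem_downSet.mp hq
    have : (p.1.castSucc, p.2.succ) = (q.1.castSucc, q.2.succ) :=
      hsnd _ h1 _ h2 (by rw [h])
    have h1' : p.1.castSucc = q.1.castSucc := congrArg Prod.fst this
    exact Prod.ext (Fin.castSucc_injective _ h1') h

/-- Crossing transfer: if the arcs of `P` are exactly the lifted arcs of `A`,
then `k`-crossings correspond. -/
lemma cross_iff {k : ℕ} {P : Finpartition (Finset.univ : Finset (Fin (n + 1)))}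
    {A : Finset (Fin n × Fin n)}
    (hup : ∀ a b : Fin (n + 1), IsArc P a b ↔ (a, b) ∈ upSet A) :
    PartitionHasKCrossing k P ↔ BraidHasKCrossing k A := by
  constructor
  · rintro ⟨ii, jj, harc, hii, hjj, hcross⟩
    have hbound : ∀ m, ((ii m : ℕ) < n) ∧ 0 < (jj m : ℕ) ∧ (jj m : ℕ) ≤ n := by
      intro m
      obtain ⟨i, j, _, h1, h2⟩ := mem_upSet.mp ((hup _ _).mp (harc m))
      refine ⟨?_, ?_, ?_⟩
      · rw [h1]; exact i.isLt
      · rw [h2]; simp [Fin.val_succ]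
      · have := (jj m).isLt; omega
    refine ⟨fun m => ⟨(ii m : ℕ), (hbound m).1⟩,
            fun m => ⟨(jj m : ℕ) - 1, by have := (hbound m).2; omega⟩, ?_, ?_, ?_, ?_⟩
    · intro m
      obtain ⟨i, j, hA, h1, h2⟩ := mem_upSet.mp ((hup _ _).mp (harc m))
      have hv1 : (ii m : ℕ) = (i : ℕ) := congrArg Fin.val h1
      have hv2 : (jj m : ℕ) = (j : ℕ) + 1 := congrArg Fin.val h2
      have e1 : (⟨(ii m : ℕ), (hbound m).1⟩ : Fin n) = i := by
        apply Fin.ext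
        show (ii m : ℕ) = (i : ℕ)
        exact hv1
      have e2 : (⟨(jj m : ℕ) - 1, by have := (hbound m).2; omega⟩ : Fin n) = j := by
        apply Fin.ext
        show (jj m : ℕ) - 1 = (j : ℕ)
        omega
      beta_reduce
      rw [e1, e2]
      exact hA
    · intro m m' h
      have := Fin.lt_def.mp (hii h)
      exact Fin.lt_def.mpr this
    · intro m m' h
      have := Fin.lt_def.mp (hjj h)
      have hb := (hbound m).2.1
      exact Fin.lt_def.mpr (by simp; omega)
    · intro m m'
      have := Fin.lt_def.mp (hcross m m')
      have hb := (hbound m').2.1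
      exact Fin.le_def.mpr (by simp; omega)
  · rintro ⟨ii, jj, harc, hii, hjj, hcross⟩
    refine ⟨fun m => (ii m).castSucc, fun m => (jj m).succ, ?_, ?_, ?_, ?_⟩
    · intro m
      exact (hup _ _).mpr (mem_upSet.mpr ⟨ii m, jj m, harc m, rfl, rfl⟩)
    · intro m m' h
      exact Fin.castSucc_lt_castSucc_iff.mpr (hii h)
    · intro m m' h
      exact Fin.succ_lt_succ_iff.mpr (hjj h)
    · intro m m'
      exact Fin.castSucc_lt_succ_iff.mpr (hcross m m')

end ArcBijection

/-- the number of `k`-noncrossing partitions of `[N]` equals the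
number of `k`-noncrossing braids over `[N-1]`. -/
theorem partitions_eq_braids (k N : ℕ) (hk : 3 ≤ k) (hN : 1 ≤ N) :
    Nat.card {P : Finpartition (Finset.univ : Finset (Fin N)) //
        ¬ PartitionHasKCrossing k P} =
    Nat.card {A : Finset (Fin (N - 1) × Fin (N - 1)) //
        IsBraid A ∧ ¬ BraidHasKCrossing k A} := by
  obtain ⟨n, rfl⟩ : ∃ n, N = n + 1 := ⟨N - 1, by omega⟩
  have hred : n + 1 - 1 = n := rfl
  rw [show (n + 1 - 1) = n from rfl]
  symm
  apply Nat.card_congr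
  refine Equiv.ofBijective
    (fun A => ⟨partitionOf (upSet A.1), ?_⟩) ⟨?_, ?_⟩
  · -- the image partition has no k-crossing
    obtain ⟨A, hbraid, hnc⟩ := A
    have hM : IsMatching (upSet A) := upSet_isMatching hbraid
    have hup : ∀ a b : Fin (n + 1), IsArc (partitionOf (upSet A)) a b ↔ (a, b) ∈ upSet A :=
      fun a b => isArc_partitionOf hM
    exact fun hcr => hnc ((cross_iff hup).mp hcr)
  · -- injective
    rintro ⟨A₁, hb₁, _⟩ ⟨A₂, hb₂, _⟩ h
    have h' : partitionOf (upSet A₁) = partitionOf (upSet A₂) := congrArg Subtype.val h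
    have e1 : arcSet (partitionOf (upSet A₁)) = upSet A₁ :=
      arcSet_partitionOf (upSet_isMatching hb₁)
    have e2 : arcSet (partitionOf (upSet A₂)) = upSet A₂ :=
      arcSet_partitionOf (upSet_isMatching hb₂)
    have : upSet A₁ = upSet A₂ := by rw [← e1, ← e2, h']
    exact Subtype.ext (upSet_injective this)
  · -- surjective
    rintro ⟨P, hnc⟩
    have hM : IsMatching (arcSet P) := arcSet_isMatching
    have hud : upSet (downSet (arcSet P)) = arcSet P := upSet_downSet hM.1
    have hbraid : IsBraid (downSet (arcSet P)) := downSet_isBraid hM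
    have hPeq : partitionOf (upSet (downSet (arcSet P))) = P := by
      apply arcSet_injective
      rw [arcSet_partitionOf (by rw [hud]; exact hM), hud]
    have hup : ∀ a b : Fin (n + 1), IsArc P a b ↔ (a, b) ∈ upSet (downSet (arcSet P)) := by
      intro a b
      rw [hud, mem_arcSet']
    have hncA : ¬ BraidHasKCrossing k (downSet (arcSet P)) :=
      fun hcr => hnc ((cross_iff hup).mpr hcr)
    exact ⟨⟨downSet (arcSet P), hbraid, hncA⟩, Subtype.ext hPeq⟩
end

section
/- Fix an integer k ≥ 3 and N ≥ 1. The number of 2-regular, k-noncrossing partitions of [N] equals the number of loop-free k-noncrossing braids over [N−1]. -/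
open Finset

/-! ### Auxiliary development for the bijection -/

namespace TRBAux

open Relation Finset

/-- Totality of reachability towards a common target when in-degree is at most one. -/
theorem reach_total {α : Type*} {r : α → α → Prop}
    (hinj : ∀ {x y z : α}, r x z → r y z → x = y) :
    ∀ {x y z : α}, ReflTransGen r x z → ReflTransGen r y z →
      ReflTransGen r x y ∨ ReflTransGen r y x := by
  intro x y z hx hy
  induction hx using ReflTransGen.head_induction_on with
  | refl => exact Or.inr hy
  | head h _ ih =>
      rcases ih with h1 | h2
      · exact Or.inl (ReflTransGen.head h h1)
      · rcases h2.cases_tail with rfl | ⟨u, hyu, huc⟩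
        · exact Or.inl (ReflTransGen.single h)
        · cases hinj huc h
          exact Or.inr hyu

theorem reach_total' {α : Type*} {r : α → α → Prop}
    (hinj : ∀ {x y z : α}, r z x → r z y → x = y) :
    ∀ {x y z : α}, ReflTransGen r z x → ReflTransGen r z y →
      ReflTransGen r x y ∨ ReflTransGen r y x := by
  intro x y z hx hy
  have := reach_total (r := Function.swap r) (fun h1 h2 => hinj h1 h2)
    (reflTransGen_swap.mpr hx) (reflTransGen_swap.mpr hy)
  rcases this with h | h
  · exact Or.inr (reflTransGen_swap.mp h)
  · exact Or.inl (reflTransGen_swap.mp h)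

/-! ### Same-block relation for finpartitions -/

variable {N M : ℕ}

def sbRel (P : Finpartition (Finset.univ : Finset (Fin N))) (x y : Fin N) : Prop :=
  ∃ B ∈ P.parts, x ∈ B ∧ y ∈ B

lemma sbRel_refl (P : Finpartition (Finset.univ : Finset (Fin N))) (x : Fin N) :
    sbRel P x x := by
  obtain ⟨B, hB, hx⟩ := P.exists_mem (Finset.mem_univ x)
  exact ⟨B, hB, hx, hx⟩

lemma sbRel_symm {P : Finpartition (Finset.univ : Finset (Fin N))} {x y : Fin N}
    (h : sbRel P x y) : sbRel P y x := by
  obtain ⟨B, hB, hx, hy⟩ := h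
  exact ⟨B, hB, hy, hx⟩

lemma sbRel_trans {P : Finpartition (Finset.univ : Finset (Fin N))} {x y z : Fin N}
    (h1 : sbRel P x y) (h2 : sbRel P y z) : sbRel P x z := by
  obtain ⟨B, hB, hx, hy⟩ := h1
  obtain ⟨C, hC, hy', hz⟩ := h2
  cases P.eq_of_mem_parts hB hC hy hy'
  exact ⟨B, hB, hx, hz⟩

lemma mem_iff_sb {P : Finpartition (Finset.univ : Finset (Fin N))} {B : Finset (Fin N)}
    (hB : B ∈ P.parts) {x : Fin N} (hx : x ∈ B) {y : Fin N} :
    y ∈ B ↔ sbRel P x y := by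
  constructor
  · intro hy; exact ⟨B, hB, hx, hy⟩
  · rintro ⟨C, hC, hx', hy⟩
    cases P.eq_of_mem_parts hB hC hx hx'
    exact hy

lemma parts_subset_of_sb {P Q : Finpartition (Finset.univ : Finset (Fin N))}
    (h : ∀ x y, sbRel P x y ↔ sbRel Q x y) : P.parts ⊆ Q.parts := by
  intro B hB
  obtain ⟨x, hx⟩ := P.nonempty_of_mem_parts hB
  obtain ⟨C, hC, hxC⟩ := Q.exists_mem (Finset.mem_univ x)
  have hBC : B = C := by
    ext y
    rw [mem_iff_sb hB hx, mem_iff_sb hC hxC, h]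
  exact hBC ▸ hC

lemma finpartition_eq_of_sb {P Q : Finpartition (Finset.univ : Finset (Fin N))}
    (h : ∀ x y, sbRel P x y ↔ sbRel Q x y) : P = Q := by
  apply Finpartition.ext
  apply Finset.Subset.antisymm (parts_subset_of_sb h)
    (parts_subset_of_sb (fun x y => (h x y).symm))

lemma sb_ofSetoid {s : Setoid (Fin N)} [DecidableRel s.r] {x y : Fin N} :
    sbRel (Finpartition.ofSetoid s) x y ↔ s.r x y := by
  constructor
  · rintro ⟨B, hB, hx, hy⟩
    have hpart : (Finpartition.ofSetoid s).part x = B :=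
      Finpartition.part_eq_of_mem _ hB hx
    have : y ∈ (Finpartition.ofSetoid s).part x := hpart ▸ hy
    exact Finpartition.mem_part_ofSetoid_iff_rel.mp this
  · intro hr
    refine ⟨(Finpartition.ofSetoid s).part x,
      (Finpartition.part_mem _).mpr (Finset.mem_univ x),
      Finpartition.mem_part _ (Finset.mem_univ x),
      Finpartition.mem_part_ofSetoid_iff_rel.mpr hr⟩

/-! ### Partition arcs -/

lemma arc_lt {P : Finpartition (Finset.univ : Finset (Fin N))} {a b : Fin N}
    (h : IsArc P a b) : a < b := h.1

lemma arc_sb {P : Finpartition (Finset.univ : Finset (Fin N))} {a b : Fin N}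
    (h : IsArc P a b) : sbRel P a b := by
  obtain ⟨_, B, hB, ha, hb, _⟩ := h
  exact ⟨B, hB, ha, hb⟩

lemma arc_left_unique {P : Finpartition (Finset.univ : Finset (Fin N))} {a b b' : Fin N}
    (h : IsArc P a b) (h' : IsArc P a b') : b = b' := by
  obtain ⟨hab, B, hB, ha, hb, hbet⟩ := h
  obtain ⟨hab', B', hB', ha', hb', hbet'⟩ := h'
  cases P.eq_of_mem_parts hB hB' ha ha'
  by_contra hne
  rcases lt_or_gt_of_ne hne with hlt | hlt
  · exact hbet' b hb ⟨hab, hlt⟩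
  · exact hbet b' hb' ⟨hab', hlt⟩

lemma arc_right_unique {P : Finpartition (Finset.univ : Finset (Fin N))} {a a' b : Fin N}
    (h : IsArc P a b) (h' : IsArc P a' b) : a = a' := by
  obtain ⟨hab, B, hB, ha, hb, hbet⟩ := h
  obtain ⟨hab', B', hB', ha', hb', hbet'⟩ := h'
  cases P.eq_of_mem_parts hB hB' hb hb'
  by_contra hne
  rcases lt_or_gt_of_ne hne with hlt | hlt
  · exact hbet a' ha' ⟨hlt, hab'⟩
  · exact hbet' a ha ⟨hlt, hab⟩

lemma rtg_sb {P : Finpartition (Finset.univ : Finset (Fin N))} {x y : Fin N}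
    (h : ReflTransGen (IsArc P) x y) : sbRel P x y := by
  induction h with
  | refl => exact sbRel_refl P x
  | tail _ hstep ih => exact sbRel_trans ih (arc_sb hstep)

lemma sb_rtg_aux (P : Finpartition (Finset.univ : Finset (Fin N))) :
    ∀ d : ℕ, ∀ x y : Fin N, ∀ B ∈ P.parts, x ∈ B → y ∈ B → x < y → (y : ℕ) - (x : ℕ) ≤ d →
      ReflTransGen (IsArc P) x y := by
  intro d
  induction d with
  | zero =>
      intro x y B _ _ _ hxy hd
      have := (Fin.lt_def.mp hxy)
      omega
  | succ d ih =>
      intro x y B hB hx hy hxy hd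
      have hyS : y ∈ B.filter (fun c => x < c) := Finset.mem_filter.2 ⟨hy, hxy⟩
      have hne : (B.filter (fun c => x < c)).Nonempty := ⟨y, hyS⟩
      set w := (B.filter (fun c => x < c)).min' hne with hw
      have hwS : w ∈ B.filter (fun c => x < c) := Finset.min'_mem _ hne
      have hwB : w ∈ B := (Finset.mem_filter.1 hwS).1
      have hxw : x < w := (Finset.mem_filter.1 hwS).2
      have harc : IsArc P x w := by
        refine ⟨hxw, B, hB, hx, hwB, ?_⟩
        rintro c hc ⟨h1, h2⟩
        exact absurd (Finset.min'_le _ c (Finset.mem_filter.2 ⟨hc, h1⟩)) (not_le.2 h2)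
      have hwy : w ≤ y := Finset.min'_le _ y hyS
      rcases eq_or_lt_of_le hwy with heq | hlt
      · exact heq ▸ ReflTransGen.single harc
      · refine ReflTransGen.head harc (ih w y B hB hwB hy hlt ?_)
        have h1 := Fin.lt_def.mp hxw
        have h2 := Fin.lt_def.mp hlt
        omega

lemma conn_iff_sb {P : Finpartition (Finset.univ : Finset (Fin N))} {x y : Fin N} :
    (ReflTransGen (IsArc P) x y ∨ ReflTransGen (IsArc P) y x) ↔ sbRel P x y := by
  constructor
  · rintro (h | h)
    · exact rtg_sb h
    · exact sbRel_symm (rtg_sb h)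
  · intro h
    rcases lt_trichotomy x y with hlt | rfl | hlt
    · obtain ⟨B, hB, hx, hy⟩ := h
      exact Or.inl (sb_rtg_aux P ((y : ℕ) - (x : ℕ)) x y B hB hx hy hlt le_rfl)
    · exact Or.inl ReflTransGen.refl
    · obtain ⟨B, hB, hx, hy⟩ := h
      exact Or.inr (sb_rtg_aux P ((x : ℕ) - (y : ℕ)) y x B hB hy hx hlt le_rfl)

/-! ### Braids as step relations on `Fin (M+1)` -/

def stepA (A : Finset (Fin M × Fin M)) (a b : Fin (M + 1)) : Prop :=
  ∃ q ∈ A, q.1.castSucc = a ∧ q.2.succ = b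

lemma stepA_lt {A : Finset (Fin M × Fin M)} (hA : IsBraid A) {a b : Fin (M + 1)}
    (h : stepA A a b) : a < b := by
  obtain ⟨q, hq, h1, h2⟩ := h
  have hle := hA.1 q hq
  rw [← h1, ← h2]
  exact Fin.castSucc_lt_succ_iff.mpr hle

lemma stepA_gap {A : Finset (Fin M × Fin M)} (hA : IsBraid A) (hlf : BraidLoopFree A)
    {a b : Fin (M + 1)} (h : stepA A a b) : (a : ℕ) + 2 ≤ (b : ℕ) := by
  obtain ⟨q, hq, h1, h2⟩ := h
  have hle := hA.1 q hq
  have hne := hlf q hq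
  have hv1 : (a : ℕ) = (q.1 : ℕ) := by rw [← h1]; rfl
  have hv2 : (b : ℕ) = (q.2 : ℕ) + 1 := by rw [← h2]; rfl
  have hvlt : (q.1 : ℕ) < (q.2 : ℕ) := by
    rcases lt_or_eq_of_le hle with h | h
    · exact h
    · exact absurd h hne
  omega

lemma stepA_left_unique {A : Finset (Fin M × Fin M)} (hA : IsBraid A) {a b b' : Fin (M + 1)}
    (h : stepA A a b) (h' : stepA A a b') : b = b' := by
  obtain ⟨q, hq, e1, e2⟩ := h
  obtain ⟨q', hq', e1', e2'⟩ := h'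
  have h11 : q.1 = q'.1 := Fin.castSucc_injective _ (e1.trans e1'.symm)
  have hqq : q = q' := hA.2.1 q hq q' hq' h11
  rw [← e2, ← e2', hqq]

lemma stepA_right_unique {A : Finset (Fin M × Fin M)} (hA : IsBraid A) {a a' b : Fin (M + 1)}
    (h : stepA A a b) (h' : stepA A a' b) : a = a' := by
  obtain ⟨q, hq, e1, e2⟩ := h
  obtain ⟨q', hq', e1', e2'⟩ := h'
  have h22 : q.2 = q'.2 := Fin.succ_injective _ (e2.trans e2'.symm)
  have hqq : q = q' := hA.2.2 q hq q' hq' h22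
  rw [← e1, ← e1', hqq]

lemma rtg_le_of_lt {α : Type*} [Preorder α] {r : α → α → Prop}
    (hlt : ∀ {x y}, r x y → x < y) {x y : α} (h : ReflTransGen r x y) : x ≤ y := by
  induction h with
  | refl => exact le_rfl
  | tail _ hstep ih => exact ih.trans (hlt hstep).le

/-- The partition associated to a braid. -/
noncomputable def partOf (A : Finset (Fin M × Fin M)) :
    Finpartition (Finset.univ : Finset (Fin (M + 1))) :=
  @Finpartition.ofSetoid _ _ _ (Relation.EqvGen.setoid (stepA A)) (Classical.decRel _)

lemma sb_partOf {A : Finset (Fin M × Fin M)} {x y : Fin (M + 1)} :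
    sbRel (partOf A) x y ↔ EqvGen (stepA A) x y := by
  letI : DecidableRel (Relation.EqvGen.setoid (stepA A)).r := Classical.decRel _
  exact sb_ofSetoid

lemma eqvGen_iff_conn {A : Finset (Fin M × Fin M)} (hA : IsBraid A) {x y : Fin (M + 1)} :
    EqvGen (stepA A) x y ↔
      (ReflTransGen (stepA A) x y ∨ ReflTransGen (stepA A) y x) := by
  constructor
  · intro h
    induction h with
    | rel a b hab => exact Or.inl (ReflTransGen.single hab)
    | refl a => exact Or.inl ReflTransGen.refl
    | symm a b _ ih => exact ih.symm
    | trans a b c _ _ ih1 ih2 =>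
        rcases ih1 with h1 | h1 <;> rcases ih2 with h2 | h2
        · exact Or.inl (h1.trans h2)
        · exact reach_total (r := stepA A)
            (fun {x y z} hx hy => stepA_right_unique hA hx hy) h1 h2
        · exact reach_total' (r := stepA A)
            (fun {x y z} hx hy => stepA_left_unique hA hx hy) h1 h2
        · exact Or.inr (h2.trans h1)
  · rintro (h | h)
    · induction h with
      | refl => exact EqvGen.refl x
      | tail _ hstep ih => exact EqvGen.trans _ _ _ ih (EqvGen.rel _ _ hstep)
    · have : EqvGen (stepA A) y x := by
        induction h with
        | refl => exact EqvGen.refl y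
        | tail _ hstep ih => exact EqvGen.trans _ _ _ ih (EqvGen.rel _ _ hstep)
      exact EqvGen.symm _ _ this

lemma sb_partOf_conn {A : Finset (Fin M × Fin M)} (hA : IsBraid A) {x y : Fin (M + 1)} :
    sbRel (partOf A) x y ↔
      (ReflTransGen (stepA A) x y ∨ ReflTransGen (stepA A) y x) := by
  rw [sb_partOf, eqvGen_iff_conn hA]

/-- Key lemma: the arcs of `partOf A` are exactly the lifted arcs of `A`. -/
lemma arc_partOf_iff {A : Finset (Fin M × Fin M)} (hA : IsBraid A) {a b : Fin (M + 1)} :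
    IsArc (partOf A) a b ↔ stepA A a b := by
  constructor
  · rintro ⟨hab, B, hB, ha, hb, hbet⟩
    have hsb : sbRel (partOf A) a b := ⟨B, hB, ha, hb⟩
    have hconn := (sb_partOf_conn hA).mp hsb
    have hR : ReflTransGen (stepA A) a b := by
      rcases hconn with h | h
      · exact h
      · exact absurd (rtg_le_of_lt (fun h => stepA_lt hA h) h) (not_le.2 hab)
    rcases hR.cases_head with rfl | ⟨w, hw, hwb⟩
    · exact absurd hab (lt_irrefl a)
    · have hwB : w ∈ B := (mem_iff_sb hB ha).mpr
        ((sb_partOf_conn hA).mpr (Or.inl (ReflTransGen.single hw)))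
      have hwle : w ≤ b := rtg_le_of_lt (fun h => stepA_lt hA h) hwb
      rcases eq_or_lt_of_le hwle with rfl | hlt
      · exact hw
      · exact absurd ⟨stepA_lt hA hw, hlt⟩ (hbet w hwB)
  · intro h
    have hab : a < b := stepA_lt hA h
    have hsb : sbRel (partOf A) a b :=
      (sb_partOf_conn hA).mpr (Or.inl (ReflTransGen.single h))
    obtain ⟨B, hB, ha, hb⟩ := hsb
    refine ⟨hab, B, hB, ha, hb, ?_⟩
    rintro c hc ⟨hac, hcb⟩
    have hsb2 : sbRel (partOf A) a c := (mem_iff_sb hB ha).mp hc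
    rcases (sb_partOf_conn hA).mp hsb2 with hR | hR
    · rcases hR.cases_head with rfl | ⟨w, hw, hwc⟩
      · exact absurd hac (lt_irrefl a)
      · have : w = b := stepA_left_unique hA hw h
        subst this
        exact absurd (rtg_le_of_lt (fun h => stepA_lt hA h) hwc) (not_le.2 hcb)
    · exact absurd (rtg_le_of_lt (fun h => stepA_lt hA h) hR) (not_le.2 hac)

/-- In a block of `partOf A`, elements below `y` have a next arc bounded by `y`. -/
lemma exists_step_le {A : Finset (Fin M × Fin M)} (hA : IsBraid A) {B : Finset (Fin (M + 1))}
    (hB : B ∈ (partOf A).parts) {x y : Fin (M + 1)} (hx : x ∈ B) (hy : y ∈ B) (hxy : x < y) :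
    ∃ w, stepA A x w ∧ w ≤ y := by
  have hsb : sbRel (partOf A) x y := ⟨B, hB, hx, hy⟩
  rcases (sb_partOf_conn hA).mp hsb with hR | hR
  · rcases hR.cases_head with rfl | ⟨w, hw, hwy⟩
    · exact absurd hxy (lt_irrefl x)
    · exact ⟨w, hw, rtg_le_of_lt (fun h => stepA_lt hA h) hwy⟩
  · exact absurd (rtg_le_of_lt (fun h => stepA_lt hA h) hR) (not_le.2 hxy)

lemma twoRegular_partOf {A : Finset (Fin M × Fin M)} (hA : IsBraid A)
    (hlf : BraidLoopFree A) : TwoRegular (partOf A) := by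
  have key : ∀ B ∈ (partOf A).parts, ∀ x ∈ B, ∀ y ∈ B, x < y → (x : ℕ) + 2 ≤ (y : ℕ) := by
    intro B hB x hx y hy hxy
    obtain ⟨w, hw, hwy⟩ := exists_step_le hA hB hx hy hxy
    have h1 := stepA_gap hA hlf hw
    have h2 : (w : ℕ) ≤ (y : ℕ) := hwy
    omega
  intro B hB x hx y hy hne
  rcases lt_trichotomy x y with hlt | rfl | hlt
  · have := key B hB x hx y hy hlt
    rcases abs_cases (((x : ℕ) : ℤ) - ((y : ℕ) : ℤ)) with ⟨h, _⟩ | ⟨h, _⟩ <;> omega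
  · exact absurd rfl hne
  · have := key B hB y hy x hx hlt
    rcases abs_cases (((x : ℕ) : ℤ) - ((y : ℕ) : ℤ)) with ⟨h, _⟩ | ⟨h, _⟩ <;> omega

/-! ### The braid associated to a partition -/

noncomputable def braidOf (P : Finpartition (Finset.univ : Finset (Fin (M + 1)))) :
    Finset (Fin M × Fin M) :=
  @Finset.filter _ (fun q => IsArc P q.1.castSucc q.2.succ) (Classical.decPred _) Finset.univ

lemma mem_braidOf {P : Finpartition (Finset.univ : Finset (Fin (M + 1)))} {q : Fin M × Fin M} :
    q ∈ braidOf P ↔ IsArc P q.1.castSucc q.2.succ := by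
  letI : DecidablePred (fun q : Fin M × Fin M => IsArc P q.1.castSucc q.2.succ) :=
    Classical.decPred _
  unfold braidOf
  rw [Finset.mem_filter]
  simp

lemma isBraid_braidOf (P : Finpartition (Finset.univ : Finset (Fin (M + 1)))) :
    IsBraid (braidOf P) := by
  refine ⟨?_, ?_, ?_⟩
  · intro p hp
    have h := (mem_braidOf.mp hp).1
    exact Fin.castSucc_lt_succ_iff.mp h
  · intro p hp q hq h1
    have hp' := mem_braidOf.mp hp
    have hq' := mem_braidOf.mp hq
    rw [h1] at hp'
    have := arc_left_unique hp' hq'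
    exact Prod.ext h1 (Fin.succ_injective _ this)
  · intro p hp q hq h2
    have hp' := mem_braidOf.mp hp
    have hq' := mem_braidOf.mp hq
    rw [h2] at hp'
    have := arc_right_unique hp' hq'
    exact Prod.ext (Fin.castSucc_injective _ this) h2

lemma loopFree_braidOf {P : Finpartition (Finset.univ : Finset (Fin (M + 1)))}
    (h2r : TwoRegular P) : BraidLoopFree (braidOf P) := by
  intro p hp heq
  obtain ⟨hlt, B, hB, ha, hb, _⟩ := mem_braidOf.mp hp
  have hne : p.1.castSucc ≠ p.2.succ := ne_of_lt hlt
  have := h2r B hB _ ha _ hb hne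
  have hv1 : ((p.1.castSucc : Fin (M + 1)) : ℕ) = (p.1 : ℕ) := rfl
  have hv2 : ((p.2.succ : Fin (M + 1)) : ℕ) = (p.2 : ℕ) + 1 := rfl
  rw [hv1, hv2] at this
  have heqv : (p.1 : ℕ) = (p.2 : ℕ) := congrArg Fin.val heq
  rcases abs_cases (((p.1 : ℕ) : ℤ) - (((p.2 : ℕ) + 1 : ℕ) : ℤ)) with ⟨h, _⟩ | ⟨h, _⟩ <;>
    · push_cast at this h ⊢
      omega

/-- `stepA (braidOf P)` coincides with `IsArc P`. -/
lemma stepA_braidOf {P : Finpartition (Finset.univ : Finset (Fin (M + 1)))}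
    {a b : Fin (M + 1)} : stepA (braidOf P) a b ↔ IsArc P a b := by
  constructor
  · rintro ⟨q, hq, h1, h2⟩
    have h := mem_braidOf.mp hq
    rw [← h1, ← h2]
    exact h
  · intro h
    have hab : a < b := h.1
    have hav : (a : ℕ) < (b : ℕ) := hab
    have hbv : (b : ℕ) ≤ M := Nat.lt_succ_iff.mp b.isLt
    have haM : (a : ℕ) < M := lt_of_lt_of_le hav hbv
    have hbM : (b : ℕ) - 1 < M := by omega
    have e1 : (⟨(a : ℕ), haM⟩ : Fin M).castSucc = a := by
      apply Fin.ext; rfl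
    have e2 : (⟨(b : ℕ) - 1, hbM⟩ : Fin M).succ = b := by
      apply Fin.ext
      show (b : ℕ) - 1 + 1 = (b : ℕ)
      omega
    refine ⟨(⟨(a : ℕ), haM⟩, ⟨(b : ℕ) - 1, hbM⟩), ?_, e1, e2⟩
    rw [mem_braidOf]
    show IsArc P (⟨(a : ℕ), haM⟩ : Fin M).castSucc (⟨(b : ℕ) - 1, hbM⟩ : Fin M).succ
    rw [e1, e2]
    exact h

/-! ### Crossing transport -/

lemma partCross_of_braidCross {k : ℕ} {P : Finpartition (Finset.univ : Finset (Fin (M + 1)))}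
    (h : BraidHasKCrossing k (braidOf P)) : PartitionHasKCrossing k P := by
  obtain ⟨ii, jj, harc, hmi, hmj, hord⟩ := h
  refine ⟨fun m => (ii m).castSucc, fun m => (jj m).succ, ?_, ?_, ?_, ?_⟩
  · intro m; exact mem_braidOf.mp (harc m)
  · intro m m' hmm; exact Fin.castSucc_lt_castSucc_iff.mpr (hmi hmm)
  · intro m m' hmm; exact Fin.succ_lt_succ_iff.mpr (hmj hmm)
  · intro m m'; exact Fin.castSucc_lt_succ_iff.mpr (hord m m')

lemma braidCross_of_partCross {k : ℕ} {A : Finset (Fin M × Fin M)} (hA : IsBraid A)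
    (h : PartitionHasKCrossing k (partOf A)) : BraidHasKCrossing k A := by
  obtain ⟨ii, jj, harc, hmi, hmj, hord⟩ := h
  have hstep : ∀ m, ∃ q ∈ A, q.1.castSucc = ii m ∧ q.2.succ = jj m := fun m =>
    (arc_partOf_iff hA).mp (harc m)
  choose q hqA e1 e2 using hstep
  refine ⟨fun m => (q m).1, fun m => (q m).2, ?_, ?_, ?_, ?_⟩
  · intro m
    have := hqA m
    rwa [show ((q m).1, (q m).2) = q m from rfl]
  · intro m m' hmm
    have : (q m).1.castSucc < (q m').1.castSucc := by rw [e1, e1]; exact hmi hmm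
    exact Fin.castSucc_lt_castSucc_iff.mp this
  · intro m m' hmm
    have : (q m).2.succ < (q m').2.succ := by rw [e2, e2]; exact hmj hmm
    exact Fin.succ_lt_succ_iff.mp this
  · intro m m'
    have : (q m).1.castSucc < (q m').2.succ := by rw [e1, e2]; exact hord m m'
    exact Fin.castSucc_lt_succ_iff.mp this

/-! ### Round trips -/

lemma partOf_braidOf (P : Finpartition (Finset.univ : Finset (Fin (M + 1)))) :
    partOf (braidOf P) = P := by
  apply finpartition_eq_of_sb
  intro x y
  rw [sb_partOf_conn (isBraid_braidOf P)]
  have hstep : ∀ a b : Fin (M + 1), stepA (braidOf P) a b ↔ IsArc P a b :=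
    fun a b => stepA_braidOf
  have hR : ∀ a b : Fin (M + 1),
      ReflTransGen (stepA (braidOf P)) a b ↔ ReflTransGen (IsArc P) a b := by
    intro a b
    constructor <;> intro h <;> (induction h with
      | refl => exact ReflTransGen.refl
      | tail _ hstep' ih => exact ReflTransGen.tail ih (by
          first
          | exact (hstep _ _).mp hstep'
          | exact (hstep _ _).mpr hstep'))
  rw [hR, hR]
  exact conn_iff_sb

lemma braidOf_partOf {A : Finset (Fin M × Fin M)} (hA : IsBraid A) :
    braidOf (partOf A) = A := by
  ext q
  rw [mem_braidOf, arc_partOf_iff hA]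
  constructor
  · rintro ⟨q', hq', e1, e2⟩
    have h1 : q'.1 = q.1 := Fin.castSucc_injective _ e1
    have h2 : q'.2 = q.2 := Fin.succ_injective _ e2
    have : q' = q := Prod.ext h1 h2
    exact this ▸ hq'
  · intro hq
    exact ⟨q, hq, rfl, rfl⟩

/-- The main bijection. -/
noncomputable def mainEquiv (k M : ℕ) :
    {P : Finpartition (Finset.univ : Finset (Fin (M + 1))) //
        ¬ PartitionHasKCrossing k P ∧ TwoRegular P} ≃
    {A : Finset (Fin M × Fin M) //
        IsBraid A ∧ ¬ BraidHasKCrossing k A ∧ BraidLoopFree A} where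
  toFun := fun ⟨P, hP⟩ =>
    ⟨braidOf P, isBraid_braidOf P,
      fun hc => hP.1 (partCross_of_braidCross hc), loopFree_braidOf hP.2⟩
  invFun := fun ⟨A, hA⟩ =>
    ⟨partOf A,
      fun hc => hA.2.1 (braidCross_of_partCross hA.1 hc),
      twoRegular_partOf hA.1 hA.2.2⟩
  left_inv := fun ⟨P, hP⟩ => Subtype.ext (partOf_braidOf P)
  right_inv := fun ⟨A, hA⟩ => Subtype.ext (braidOf_partOf hA.1)

end TRBAux

/-- the number of `2`-regular, `k`-noncrossing partitions of `[N]`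
equals the number of loop-free `k`-noncrossing braids over `[N-1]`. -/
theorem twoRegular_partitions_eq_loopFree_braids (k N : ℕ) (hk : 3 ≤ k) (hN : 1 ≤ N) :
    Nat.card {P : Finpartition (Finset.univ : Finset (Fin N)) //
        ¬ PartitionHasKCrossing k P ∧ TwoRegular P} =
    Nat.card {A : Finset (Fin (N - 1) × Fin (N - 1)) //
        IsBraid A ∧ ¬ BraidHasKCrossing k A ∧ BraidLoopFree A} := by
  obtain ⟨M, rfl⟩ : ∃ M, N = M + 1 := ⟨N - 1, by omega⟩
  exact Nat.card_congr (TRBAux.mainEquiv k M)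
end

section
/- Fix an integer k ≥ 3, integers ℓ ≥ 0 and 0 ≤ h ≤ ℓ, and ν ∈ W_{k−1}. The number of pairs (w, S), where w = (v_0,…,v_{2ℓ}) is a B_{W_{k−1}}-walk of length 2ℓ ending at ν and S is an h-element subset of {1,…,ℓ} such that for every q ∈ S one has v_{2q−1} − v_{2q−2} = e_1 and v_{2q} − v_{2q−1} = −e_1, equals C(ℓ,h) · σ^ν_{k,2ℓ−2h}, where C(ℓ,h) is the binomial coefficient. -/
open Finset

-- auxiliary development
namespace MWC

variable {k : ℕ}

lemma wcong {α : Sort*} {n : ℕ} (w : Fin n → α) {a b : ℕ} (hab : a = b) (ha : a < n) (hb : b < n) :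
    w ⟨a, ha⟩ = w ⟨b, hb⟩ := by subst hab; rfl

lemma plusStep_eOne (hk : 3 ≤ k) : plusStep (eOne k) := by
  refine ⟨⟨1, by omega⟩, ?_⟩
  funext j
  simp only [eOne, eVec]
  by_cases hj : (j : ℕ) = 0
  · simp [hj]
  · rw [if_neg hj, if_neg (by omega)]

lemma minusStep_negEOne (hk : 3 ≤ k) : minusStep (-(eOne k)) := by
  obtain ⟨i, hi⟩ := plusStep_eOne hk
  exact ⟨i, by rw [← hi]⟩

lemma inW_add_eOne {v : Pt k} (hv : inW v) : inW (v + eOne k) := by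
  constructor
  · intro i j hij
    have h1 := hv.1 hij
    have hij' : (i : ℕ) < (j : ℕ) := hij
    simp only [Pi.add_apply, eOne]
    rw [if_neg (by omega)]
    by_cases hi : (i : ℕ) = 0
    · rw [if_pos hi]; linarith
    · rw [if_neg hi]; linarith
  · intro i
    have := hv.2 i
    simp only [Pi.add_apply, eOne]
    split <;> linarith

def LoopsAt {L : ℕ} (w : Fin (L + 1) → Pt k) (S : Finset ℕ) : Prop :=
  ∀ q : ℕ, q ∈ S → ∀ hq : 2 * q < L + 1,
    w ⟨2 * q - 1, by omega⟩ - w ⟨2 * q - 2, by omega⟩ = eOne k ∧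
    w ⟨2 * q, hq⟩ - w ⟨2 * q - 1, by omega⟩ = -eOne k

def insW (ℓ q : ℕ) (hq1 : 1 ≤ q) (hq2 : q ≤ ℓ) (w : Fin (2 * (ℓ - 1) + 1) → Pt k) :
    Fin (2 * ℓ + 1) → Pt k := fun t =>
  if _h1 : (t : ℕ) < 2 * q - 1 then w ⟨t, by omega⟩
  else if _h2 : (t : ℕ) = 2 * q - 1 then w ⟨2 * q - 2, by omega⟩ + eOne k
  else w ⟨(t : ℕ) - 2, by have := t.isLt; omega⟩

def delW (ℓ q : ℕ) (hq1 : 1 ≤ q) (hq2 : q ≤ ℓ) (w : Fin (2 * ℓ + 1) → Pt k) :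
    Fin (2 * (ℓ - 1) + 1) → Pt k := fun t =>
  if _h1 : (t : ℕ) < 2 * q - 1 then w ⟨t, by have := t.isLt; omega⟩
  else w ⟨(t : ℕ) + 2, by have := t.isLt; omega⟩

lemma insW_lt {ℓ q : ℕ} (hq1 : 1 ≤ q) (hq2 : q ≤ ℓ) (w : Fin (2 * (ℓ - 1) + 1) → Pt k)
    {t : ℕ} (ht : t < 2 * ℓ + 1) (h : t < 2 * q - 1) :
    insW ℓ q hq1 hq2 w ⟨t, ht⟩ = w ⟨t, by omega⟩ := dif_pos h

lemma insW_mid {ℓ q : ℕ} (hq1 : 1 ≤ q) (hq2 : q ≤ ℓ) (w : Fin (2 * (ℓ - 1) + 1) → Pt k)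
    {t : ℕ} (ht : t < 2 * ℓ + 1) (h : t = 2 * q - 1) :
    insW ℓ q hq1 hq2 w ⟨t, ht⟩ = w ⟨2 * q - 2, by omega⟩ + eOne k := by
  simp only [insW, Fin.val_mk]
  rw [dif_neg (by omega), dif_pos h]

lemma insW_ge {ℓ q : ℕ} (hq1 : 1 ≤ q) (hq2 : q ≤ ℓ) (w : Fin (2 * (ℓ - 1) + 1) → Pt k)
    {t : ℕ} (ht : t < 2 * ℓ + 1) (h : 2 * q ≤ t) :
    insW ℓ q hq1 hq2 w ⟨t, ht⟩ = w ⟨t - 2, by omega⟩ := by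
  simp only [insW, Fin.val_mk]
  rw [dif_neg (by omega), dif_neg (by omega)]

lemma delW_lt {ℓ q : ℕ} (hq1 : 1 ≤ q) (hq2 : q ≤ ℓ) (w : Fin (2 * ℓ + 1) → Pt k)
    {t : ℕ} (ht : t < 2 * (ℓ - 1) + 1) (h : t < 2 * q - 1) :
    delW ℓ q hq1 hq2 w ⟨t, ht⟩ = w ⟨t, by omega⟩ := dif_pos h

lemma delW_ge {ℓ q : ℕ} (hq1 : 1 ≤ q) (hq2 : q ≤ ℓ) (w : Fin (2 * ℓ + 1) → Pt k)
    {t : ℕ} (ht : t < 2 * (ℓ - 1) + 1) (h : ¬ t < 2 * q - 1) :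
    delW ℓ q hq1 hq2 w ⟨t, ht⟩ = w ⟨t + 2, by omega⟩ := dif_neg h


lemma loop_extract {L q : ℕ} {w : Fin (L + 1) → Pt k} {S : Finset ℕ} (hL : LoopsAt w S)
    (hq : q ∈ S) (h2 : 2 * q < L + 1) :
    w ⟨2 * q - 1, by omega⟩ - w ⟨2 * q - 2, by omega⟩ = eOne k ∧
    w ⟨2 * q, h2⟩ - w ⟨2 * q - 1, by omega⟩ = -eOne k := hL q hq h2

lemma loop_flat {L q : ℕ} {w : Fin (L + 1) → Pt k} {S : Finset ℕ} (hL : LoopsAt w S)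
    (hq : q ∈ S) (h2 : 2 * q < L + 1) :
    w ⟨2 * q, h2⟩ = w ⟨2 * q - 2, by omega⟩ := by
  obtain ⟨L1, L2⟩ := loop_extract hL hq h2
  rw [sub_eq_iff_eq_add] at L1 L2
  rw [L2, L1]
  abel

lemma delW_isWalk (hk : 3 ≤ k) {ℓ q : ℕ} (hq1 : 1 ≤ q) (hq2 : q ≤ ℓ)
    {w : Fin (2 * ℓ + 1) → Pt k} (hw : IsBWalk (inW (k := k)) (2 * ℓ) w)
    {S : Finset ℕ} (hL : LoopsAt w S) (hqS : q ∈ S) :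
    IsBWalk (inW (k := k)) (2 * (ℓ - 1)) (delW ℓ q hq1 hq2 w) := by
  refine ⟨?_, ?_, ?_⟩
  · rw [show (⟨0, Nat.succ_pos (2*(ℓ-1))⟩ : Fin (2*(ℓ-1)+1)) = ⟨0, by omega⟩ from rfl,
      delW_lt hq1 hq2 w _ (by omega)]
    exact hw.1
  · intro t
    rw [delW]
    split
    · exact hw.2.1 _
    · exact hw.2.1 _
  · intro t ht
    by_cases h1 : t + 1 < 2 * q - 1
    · rw [delW_lt hq1 hq2 w _ h1, delW_lt hq1 hq2 w _ (by omega)]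
      exact hw.2.2 t (by omega)
    by_cases h2 : t + 1 = 2 * q - 1
    · rw [delW_ge hq1 hq2 w _ (by omega), delW_lt hq1 hq2 w _ (by omega)]
      have hkey : w ⟨t, by omega⟩ = w ⟨2 * q, by omega⟩ := by
        rw [loop_flat hL hqS (by omega)]
        exact wcong w (by omega) _ _
      rw [hkey, wcong w (show t + 1 + 2 = 2 * q + 1 by omega) (by omega) (by omega)]
      constructor
      · intro _
        exact (hw.2.2 (2 * q) (by omega)).1 (Nat.odd_iff.mpr (by omega))
      · intro hpar
        exfalso
        rw [Nat.even_iff] at hpar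
        omega
    · rw [delW_ge hq1 hq2 w _ (by omega), delW_ge hq1 hq2 w _ (by omega)]
      rw [wcong w (show t + 1 + 2 = (t + 2) + 1 by omega) (by omega) (by omega)]
      constructor
      · intro hpar
        rw [Nat.odd_iff] at hpar
        exact (hw.2.2 (t + 2) (by omega)).1 (Nat.odd_iff.mpr (by omega))
      · intro hpar
        rw [Nat.even_iff] at hpar
        exact (hw.2.2 (t + 2) (by omega)).2 (Nat.even_iff.mpr (by omega))

lemma delW_last {ℓ q : ℕ} (hq1 : 1 ≤ q) (hq2 : q ≤ ℓ) {ν : Pt k}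
    {w : Fin (2 * ℓ + 1) → Pt k} (hlast : w (Fin.last (2 * ℓ)) = ν)
    {S : Finset ℕ} (hL : LoopsAt w S) (hqS : q ∈ S) :
    delW ℓ q hq1 hq2 w (Fin.last (2 * (ℓ - 1))) = ν := by
  have hlast' : w ⟨2 * ℓ, by omega⟩ = ν := hlast
  rw [show Fin.last (2 * (ℓ - 1)) = ⟨2 * (ℓ - 1), by omega⟩ from rfl]
  by_cases h1 : 2 * (ℓ - 1) < 2 * q - 1
  · -- then q = ℓ
    rw [delW_lt hq1 hq2 w _ h1]
    have h2 : w ⟨2 * q, by omega⟩ = ν := by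
      rw [wcong w (show 2 * q = 2 * ℓ by omega) _ (by omega)]; exact hlast'
    rw [wcong w (show 2 * (ℓ - 1) = 2 * q - 2 by omega) _ (by omega), ← loop_flat hL hqS (by omega)]
    exact h2
  · rw [delW_ge hq1 hq2 w _ h1, wcong w (show 2 * (ℓ - 1) + 2 = 2 * ℓ by omega) _ (by omega)]
    exact hlast'

lemma delW_loops {ℓ q : ℕ} (hq1 : 1 ≤ q) (hq2 : q ≤ ℓ)
    {w : Fin (2 * ℓ + 1) → Pt k} {S : Finset ℕ} (hL : LoopsAt w S)
    (hS : ∀ x ∈ S, x = q ∨ x < q) :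
    LoopsAt (delW ℓ q hq1 hq2 w) (S.erase q) := by
  intro x hx h2x
  have hxS := Finset.mem_of_mem_erase hx
  have hxq : x < q := by
    rcases hS x hxS with h | h
    · exact absurd h (Finset.ne_of_mem_erase hx)
    · exact h
  have h2x' : 2 * x < 2 * ℓ + 1 := by omega
  obtain ⟨L1, L2⟩ := loop_extract hL hxS h2x'
  rw [delW_lt hq1 hq2 w _ (by omega), delW_lt hq1 hq2 w _ (by omega),
    delW_lt hq1 hq2 w _ (by omega)]
  exact ⟨L1, L2⟩


lemma insW_isWalk (hk : 3 ≤ k) {ℓ q : ℕ} (hq1 : 1 ≤ q) (hq2 : q ≤ ℓ)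
    {w : Fin (2 * (ℓ - 1) + 1) → Pt k} (hw : IsBWalk (inW (k := k)) (2 * (ℓ - 1)) w) :
    IsBWalk (inW (k := k)) (2 * ℓ) (insW ℓ q hq1 hq2 w) := by
  refine ⟨?_, ?_, ?_⟩
  · rw [show (⟨0, Nat.succ_pos (2*ℓ)⟩ : Fin (2*ℓ+1)) = ⟨0, by omega⟩ from rfl,
      insW_lt hq1 hq2 w _ (by omega)]
    exact hw.1
  · intro t
    rw [insW]
    split
    · exact hw.2.1 _
    split
    · exact inW_add_eOne (hw.2.1 _)
    · exact hw.2.1 _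
  · intro t ht
    by_cases h1 : t + 1 < 2 * q - 1
    · rw [insW_lt hq1 hq2 w _ h1, insW_lt hq1 hq2 w _ (by omega)]
      exact hw.2.2 t (by omega)
    by_cases h2 : t + 1 = 2 * q - 1
    · rw [insW_mid hq1 hq2 w _ h2, insW_lt hq1 hq2 w _ (by omega),
        wcong w (show t = 2 * q - 2 by omega) (by omega) (by omega), add_sub_cancel_left]
      constructor
      · intro _
        exact plusStep_eOne hk
      · intro hpar
        exfalso
        rw [Nat.even_iff] at hpar
        omega
    by_cases h3 : t + 1 = 2 * q
    · rw [insW_ge hq1 hq2 w _ (by omega), insW_mid hq1 hq2 w _ (by omega),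
        wcong w (show t + 1 - 2 = 2 * q - 2 by omega) (by omega) (by omega), sub_add_cancel_left]
      constructor
      · intro hpar
        exfalso
        rw [Nat.odd_iff] at hpar
        omega
      · intro _
        exact minusStep_negEOne hk
    · rw [insW_ge hq1 hq2 w _ (by omega), insW_ge hq1 hq2 w _ (by omega),
        wcong w (show t + 1 - 2 = (t - 2) + 1 by omega) (by omega) (by omega)]
      constructor
      · intro hpar
        rw [Nat.odd_iff] at hpar
        exact (hw.2.2 (t - 2) (by omega)).1 (Nat.odd_iff.mpr (by omega))
      · intro hpar
        rw [Nat.even_iff] at hpar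
        exact (hw.2.2 (t - 2) (by omega)).2 (Nat.even_iff.mpr (by omega))

lemma insW_last {ℓ q : ℕ} (hq1 : 1 ≤ q) (hq2 : q ≤ ℓ) {ν : Pt k}
    {w : Fin (2 * (ℓ - 1) + 1) → Pt k} (hlast : w (Fin.last (2 * (ℓ - 1))) = ν) :
    insW ℓ q hq1 hq2 w (Fin.last (2 * ℓ)) = ν := by
  have hlast' : w ⟨2 * (ℓ - 1), by omega⟩ = ν := hlast
  rw [show Fin.last (2 * ℓ) = ⟨2 * ℓ, by omega⟩ from rfl,
    insW_ge hq1 hq2 w _ (by omega),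
    wcong w (show 2 * ℓ - 2 = 2 * (ℓ - 1) by omega) (by omega) (by omega)]
  exact hlast'

lemma insW_loops {ℓ q : ℕ} (hq1 : 1 ≤ q) (hq2 : q ≤ ℓ)
    {w : Fin (2 * (ℓ - 1) + 1) → Pt k} {S : Finset ℕ} (hL : LoopsAt w S)
    (hS : ∀ x ∈ S, 1 ≤ x ∧ x < q) :
    LoopsAt (insW ℓ q hq1 hq2 w) (insert q S) := by
  intro x hx h2x
  rcases Finset.mem_insert.mp hx with h | h
  · subst h
    rw [insW_mid hq1 hq2 w _ (by omega), insW_lt hq1 hq2 w _ (by omega),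
      insW_ge hq1 hq2 w _ (by omega),
      wcong w (show 2 * x - 2 = 2 * x - 2 by omega) (by omega) (by omega)]
    constructor
    · rw [add_sub_cancel_left]
    · rw [sub_add_cancel_left]
  · have hx' := hS x h
    have h2x' : 2 * x < 2 * (ℓ - 1) + 1 := by omega
    obtain ⟨L1, L2⟩ := loop_extract hL h h2x'
    rw [insW_lt hq1 hq2 w _ (by omega), insW_lt hq1 hq2 w _ (by omega),
      insW_lt hq1 hq2 w _ (by omega)]
    exact ⟨L1, L2⟩

lemma delW_insW {ℓ q : ℕ} (hq1 : 1 ≤ q) (hq2 : q ≤ ℓ)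
    (w : Fin (2 * (ℓ - 1) + 1) → Pt k) :
    delW ℓ q hq1 hq2 (insW ℓ q hq1 hq2 w) = w := by
  funext t
  obtain ⟨tv, htv⟩ := t
  by_cases h1 : tv < 2 * q - 1
  · rw [delW_lt hq1 hq2 _ _ h1, insW_lt hq1 hq2 w _ h1]
  · rw [delW_ge hq1 hq2 _ _ h1, insW_ge hq1 hq2 w _ (by omega),
      wcong w (show tv + 2 - 2 = tv by omega) (by omega) (by omega)]

lemma insW_delW {ℓ q : ℕ} (hq1 : 1 ≤ q) (hq2 : q ≤ ℓ)
    (w : Fin (2 * ℓ + 1) → Pt k) {S : Finset ℕ} (hL : LoopsAt w S) (hqS : q ∈ S) :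
    insW ℓ q hq1 hq2 (delW ℓ q hq1 hq2 w) = w := by
  have hflat := loop_flat hL hqS (show 2 * q < 2 * ℓ + 1 by omega)
  funext t
  obtain ⟨tv, htv⟩ := t
  by_cases h1 : tv < 2 * q - 1
  · rw [insW_lt hq1 hq2 _ _ h1, delW_lt hq1 hq2 w _ h1]
  by_cases h2 : tv = 2 * q - 1
  · rw [insW_mid hq1 hq2 _ _ h2, delW_lt hq1 hq2 w _ (by omega)]
    obtain ⟨L1, L2⟩ := loop_extract hL hqS (show 2 * q < 2 * ℓ + 1 by omega)
    rw [sub_eq_iff_eq_add] at L1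
    rw [wcong w (show tv = 2 * q - 1 by omega) htv (by omega), L1]
    abel
  by_cases h3 : tv = 2 * q
  · rw [insW_ge hq1 hq2 _ _ (by omega), delW_lt hq1 hq2 w _ (by omega),
      wcong w (show tv - 2 = 2 * q - 2 by omega) (by omega) (by omega), ← hflat]
    exact wcong w (by omega) _ _
  · rw [insW_ge hq1 hq2 _ _ (by omega), delW_ge hq1 hq2 w _ (by omega)]
    exact wcong w (by omega) _ _


def Fiber (k ℓ : ℕ) (ν : Pt k) (S : Finset ℕ) :=
  {w : Fin (2 * ℓ + 1) → Pt k //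
    IsBWalk (inW (k := k)) (2 * ℓ) w ∧ w (Fin.last (2 * ℓ)) = ν ∧ LoopsAt w S}

lemma delete_loop (hk : 3 ≤ k) (ℓ q : ℕ) (hq1 : 1 ≤ q) (hq2 : q ≤ ℓ) (ν : Pt k)
    (S : Finset ℕ) (hS : ∀ x ∈ S, 1 ≤ x ∧ x < q) (hqS : q ∉ S) :
    Nat.card (Fiber k ℓ ν (insert q S)) = Nat.card (Fiber k (ℓ - 1) ν S) := by
  apply Nat.card_congr
  refine ⟨fun p => ⟨delW ℓ q hq1 hq2 p.1,
      delW_isWalk hk hq1 hq2 p.2.1 p.2.2.2 (Finset.mem_insert_self q S),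
      delW_last hq1 hq2 p.2.2.1 p.2.2.2 (Finset.mem_insert_self q S), ?_⟩,
    fun p => ⟨insW ℓ q hq1 hq2 p.1, insW_isWalk hk hq1 hq2 p.2.1,
      insW_last hq1 hq2 p.2.2.1, insW_loops hq1 hq2 p.2.2.2 hS⟩,
    fun p => Subtype.ext (insW_delW hq1 hq2 p.1 p.2.2.2 (Finset.mem_insert_self q S)),
    fun p => Subtype.ext (delW_insW hq1 hq2 p.1)⟩
  have := delW_loops hq1 hq2 p.2.2.2
    (fun x hx => by rcases Finset.mem_insert.mp hx with h | h
                    · exact Or.inl h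
                    · exact Or.inr (hS x h).2)
  rwa [Finset.erase_insert hqS] at this

lemma fiber_card (hk : 3 ≤ k) :
    ∀ (h ℓ : ℕ) (ν : Pt k) (S : Finset ℕ), S ⊆ Finset.Icc 1 ℓ → S.card = h →
      Nat.card (Fiber k ℓ ν S) = sigmaCount k (2 * (ℓ - h)) ν := by
  intro h
  induction h with
  | zero =>
    intro ℓ ν S hsub hcard
    have hS : S = ∅ := Finset.card_eq_zero.mp hcard
    subst hS
    simp only [Nat.sub_zero]
    rw [sigmaCount]
    exact Nat.card_congr (Equiv.subtypeEquivRight fun w =>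
      ⟨fun hw => ⟨hw.1, hw.2.1⟩,
       fun hw => ⟨hw.1, hw.2, fun q hq => absurd hq (Finset.notMem_empty q)⟩⟩)
  | succ n ih =>
    intro ℓ ν S hsub hcard
    have hne : S.Nonempty := Finset.card_pos.mp (by omega)
    set q := S.max' hne with hqdef
    have hqS : q ∈ S := S.max'_mem hne
    have hq1 := Finset.mem_Icc.mp (hsub hqS)
    set S' := S.erase q with hS'def
    have hins : insert q S' = S := Finset.insert_erase hqS
    have hS' : ∀ x ∈ S', 1 ≤ x ∧ x < q := fun x hx =>
      ⟨(Finset.mem_Icc.mp (hsub (Finset.mem_of_mem_erase hx))).1,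
       lt_of_le_of_ne (S.le_max' x (Finset.mem_of_mem_erase hx)) (Finset.ne_of_mem_erase hx)⟩
    have hq'S' : q ∉ S' := Finset.notMem_erase q S
    rw [← hins, delete_loop hk ℓ q hq1.1 hq1.2 ν S' hS' hq'S',
      ih (ℓ - 1) ν S'
        (fun x hx => Finset.mem_Icc.mpr ⟨(hS' x hx).1, by have := (hS' x hx).2; omega⟩)
        (by rw [hS'def, Finset.card_erase_of_mem hqS]; omega)]
    congr 2 <;> omega

lemma finite_walks (L : ℕ) (D : Pt k → Prop) (Q : (Fin (L + 1) → Pt k) → Prop) :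
    Finite {w : Fin (L + 1) → Pt k // IsBWalk D L w ∧ Q w} := by
  set St := {d : Pt k // ∃ i : Fin k, d = eVec k i ∨ d = -eVec k i} with hSt
  have hfin : Finite St := by
    apply Finite.of_surjective
      (fun p : Fin k × Bool => (⟨if p.2 then eVec k p.1 else -eVec k p.1,
        ⟨p.1, by rcases p.2 <;> simp⟩⟩ : St))
    rintro ⟨d, i, hd | hd⟩
    · exact ⟨(i, true), by simp [hd]⟩
    · exact ⟨(i, false), by simp [hd]⟩
  apply Finite.of_injective
    (fun p : {w : Fin (L + 1) → Pt k // IsBWalk D L w ∧ Q w} =>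
      (fun t : Fin L => (⟨p.1 t.succ - p.1 t.castSucc, by
        rcases Nat.even_or_odd ((t : ℕ) + 1) with he | ho
        · obtain ⟨i, hi⟩ := (p.2.1.2.2 t.val (by omega)).2 he
          exact ⟨i, Or.inr hi⟩
        · obtain ⟨i, hi⟩ := (p.2.1.2.2 t.val (by omega)).1 ho
          exact ⟨i, Or.inl hi⟩⟩ : St)))
  intro p1 p2 hF
  apply Subtype.ext
  have key : ∀ n (hn : n < L + 1), p1.1 ⟨n, hn⟩ = p2.1 ⟨n, hn⟩ := by
    intro n
    induction n with
    | zero => intro hn; exact p1.2.1.1.trans p2.2.1.1.symm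
    | succ n ihn =>
      intro hn
      have hn' : n < L := by omega
      have e1 : p1.1 ⟨n + 1, hn⟩ - p1.1 ⟨n, by omega⟩ =
          p2.1 ⟨n + 1, hn⟩ - p2.1 ⟨n, by omega⟩ :=
        congrArg Subtype.val (congrFun hF ⟨n, hn'⟩)
      have ih' := ihn (by omega)
      linear_combination (norm := abel) e1 + ih'
  funext t
  obtain ⟨tv, htv⟩ := t
  exact key tv htv

end MWC


/-- the number of pairs `(w, S)` of a `ℬ_{W_{k-1}}`-walk `w` of length
`2ℓ` ending at `ν` together with an `h`-element subset `S ⊆ {1,…,ℓ}` of positions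
carrying the step pair `(+e_1, -e_1)` equals `C(ℓ,h) · σ^ν_{k,2ℓ-2h}`. -/
theorem marked_walks_count (k ℓ h : ℕ) (hk : 3 ≤ k) (hh : h ≤ ℓ) (ν : Pt k)
    (hν : inW ν) :
    Nat.card {p : (Fin (2 * ℓ + 1) → Pt k) × Finset ℕ //
        IsBWalk (inW (k := k)) (2 * ℓ) p.1 ∧ p.1 (Fin.last (2 * ℓ)) = ν ∧
        p.2 ⊆ Finset.Icc 1 ℓ ∧ p.2.card = h ∧
        ∀ q : ℕ, q ∈ p.2 → ∀ hq : 2 * q < 2 * ℓ + 1,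
          p.1 ⟨2 * q - 1, by omega⟩ - p.1 ⟨2 * q - 2, by omega⟩ = eOne k ∧
          p.1 ⟨2 * q, hq⟩ - p.1 ⟨2 * q - 1, by omega⟩ = -eOne k} =
      ℓ.choose h * sigmaCount k (2 * (ℓ - h)) ν := by
  classical
  set SS := {S : Finset ℕ // S ⊆ Finset.Icc 1 ℓ ∧ S.card = h} with hSSdef
  have E1 : {p : (Fin (2 * ℓ + 1) → Pt k) × Finset ℕ //
        IsBWalk (inW (k := k)) (2 * ℓ) p.1 ∧ p.1 (Fin.last (2 * ℓ)) = ν ∧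
        p.2 ⊆ Finset.Icc 1 ℓ ∧ p.2.card = h ∧
        ∀ q : ℕ, q ∈ p.2 → ∀ hq : 2 * q < 2 * ℓ + 1,
          p.1 ⟨2 * q - 1, by omega⟩ - p.1 ⟨2 * q - 2, by omega⟩ = eOne k ∧
          p.1 ⟨2 * q, hq⟩ - p.1 ⟨2 * q - 1, by omega⟩ = -eOne k} ≃
      Σ S : SS, MWC.Fiber k ℓ ν S.1 :=
    { toFun := fun p => ⟨⟨p.1.2, p.2.2.2.1, p.2.2.2.2.1⟩,
        ⟨p.1.1, p.2.1, p.2.2.1, p.2.2.2.2.2⟩⟩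
      invFun := fun s => ⟨(s.2.1, s.1.1), s.2.2.1, s.2.2.2.1, s.1.2.1, s.1.2.2,
        s.2.2.2.2⟩
      left_inv := fun p => rfl
      right_inv := fun s => rfl }
  rw [Nat.card_congr E1]
  have eSS : {S : Finset ℕ // S ∈ (Finset.Icc 1 ℓ).powersetCard h} ≃ SS :=
    Equiv.subtypeEquivRight (fun S => Finset.mem_powersetCard)
  haveI : Fintype SS := Fintype.ofEquiv _ eSS
  haveI : ∀ S : SS, Fintype (MWC.Fiber k ℓ ν S.1) := fun S =>
    @Fintype.ofFinite _ (MWC.finite_walks (2 * ℓ) (inW (k := k))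
      (fun w => w (Fin.last (2 * ℓ)) = ν ∧ MWC.LoopsAt w S.1))
  rw [Nat.card_eq_fintype_card, Fintype.card_sigma]
  have hfib : ∀ S : SS, Fintype.card (MWC.Fiber k ℓ ν S.1) =
      sigmaCount k (2 * (ℓ - h)) ν := fun S => by
    rw [← Nat.card_eq_fintype_card]
    exact MWC.fiber_card hk h ℓ ν S.1 S.2.1 S.2.2
  rw [Finset.sum_congr rfl (fun S _ => hfib S), Finset.sum_const, Finset.card_univ,
    smul_eq_mul]
  congr 1
  rw [← Nat.card_eq_fintype_card, ← Nat.card_congr eSS, Nat.card_eq_fintype_card,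
    Fintype.card_coe, Finset.card_powersetCard, Nat.card_Icc, Nat.add_sub_cancel]
end
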